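/- arXiv:1809.10220 — 6 statements merged into one kernel-verified Lean document; each statement's English description precedes it below -/
import Mathlib

section
/- Let G be a group and let α, β ∈ G. Then for every integer l ≥ 2, one has [α^l, β] = (∏_{j=1}^{l-1} [α, [α^{l-j}, β]]) · [α, β]^l, where the product ∏_{j=1}^{l-1} is taken from left to right in increasing order of j. -/
open scoped commutatorElement

private lemma comm_mul_left' {G : Type*} [Group G] (a b c : G) :
    ⁅a * b, c⁆ = ⁅a, ⁅b, c⁆⁆ * ⁅b, c⁆ * ⁅a, c⁆ := by
  simp only [commutatorElement_def]; group

private lemma aux_comm {G : Type*} [Group G] (α β : G) (l : ℕ) (hl : 1 ≤ l) :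
    ⁅α ^ l, β⁆ =
      ((List.range (l - 1)).map (fun i => ⁅α, ⁅α ^ (l - (i + 1)), β⁆⁆)).prod * ⁅α, β⁆ ^ l := by
  induction l with
  | zero => omega
  | succ n ih =>
    rcases Nat.eq_or_lt_of_le hl with h | h
    · simp [← h]
    · have hn : 1 ≤ n := by omega
      obtain ⟨m, rfl⟩ : ∃ m, n = m + 1 := ⟨n - 1, by omega⟩
      have key : ⁅α ^ (m + 1 + 1), β⁆ =
          ⁅α, ⁅α ^ (m + 1), β⁆⁆ * ⁅α ^ (m + 1), β⁆ * ⁅α, β⁆ := by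
        rw [pow_succ' α (m + 1), comm_mul_left']
      rw [key]
      nth_rewrite 2 [ih hn]
      have : List.range (m + 1 + 1 - 1) = 0 :: (List.range m).map Nat.succ := by
        simp [List.range_succ_eq_map]
      rw [this, List.map_cons, List.map_map, List.prod_cons]
      have hfun : ((fun i => ⁅α, ⁅α ^ (m + 1 + 1 - (i + 1)), β⁆⁆) ∘ Nat.succ) =
          (fun i => ⁅α, ⁅α ^ (m + 1 - (i + 1)), β⁆⁆) := by
        funext i
        have : m + 1 + 1 - (Nat.succ i + 1) = m + 1 - (i + 1) := by omega
        simp [Function.comp, this]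
      rw [hfun]
      have h0 : m + 1 + 1 - (0 + 1) = m + 1 := by omega
      rw [h0, pow_succ]
      simp only [mul_assoc, Nat.add_sub_cancel, pow_succ]

/-- For a group `G`, `α β : G` and `l ≥ 2`,
`[α^l, β] = (∏_{j=1}^{l-1} [α, [α^{l-j}, β]]) · [α, β]^l`,
where the product is taken from left to right in increasing order of `j`. -/
theorem commutator_pow_left_eq {G : Type*} [Group G] (α β : G) (l : ℕ) (hl : 2 ≤ l) :
    ⁅α ^ l, β⁆ =
      ((List.range (l - 1)).map (fun i => ⁅α, ⁅α ^ (l - (i + 1)), β⁆⁆)).prod * ⁅α, β⁆ ^ l := by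
  exact aux_comm α β l (by omega)
end

section
/- Let G be a group, let k ≥ 1 be an integer, let α ∈ G and let β ∈ C_{k-1}(G). Then for every positive integer l there exists an element h ∈ C_{k+1}(G) such that [α^l, β^l] = [α, β]^{l²} · h. -/
open scoped commutatorElement

private lemma comm_pow_left {G : Type*} [Group G] (a b : G) (h : Commute ⁅a, b⁆ a) (n : ℕ) :
    ⁅a ^ n, b⁆ = ⁅a, b⁆ ^ n := by
  induction n with
  | zero => simp
  | succ n ih =>
    have e1 : ⁅a ^ (n + 1), b⁆ = a * ⁅a ^ n, b⁆ * a⁻¹ * ⁅a, b⁆ := by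
      simp only [commutatorElement_def]
      group
    have e2 : a * ⁅a, b⁆ ^ n = ⁅a, b⁆ ^ n * a := ((h.pow_left n).symm).eq
    rw [e1, ih, e2, pow_succ]
    group

private lemma comm_pow_right {G : Type*} [Group G] (a b : G) (h : Commute ⁅a, b⁆ b) (n : ℕ) :
    ⁅a, b ^ n⁆ = ⁅a, b⁆ ^ n := by
  induction n with
  | zero => simp
  | succ n ih =>
    have e1 : ⁅a, b ^ (n + 1)⁆ = ⁅a, b⁆ * (b * ⁅a, b ^ n⁆ * b⁻¹) := by
      simp only [commutatorElement_def]
      group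
    have e2 : b * ⁅a, b⁆ ^ n = ⁅a, b⁆ ^ n * b := ((h.pow_left n).symm).eq
    rw [e1, ih, e2, pow_succ']
    group

private lemma comm_pow_pow {G : Type*} [Group G] (a b : G) (ha : Commute ⁅a, b⁆ a)
    (hb : Commute ⁅a, b⁆ b) (n : ℕ) : ⁅a ^ n, b ^ n⁆ = ⁅a, b⁆ ^ (n ^ 2) := by
  have h1 : ⁅a, b ^ n⁆ = ⁅a, b⁆ ^ n := comm_pow_right a b hb n
  have h2 : Commute ⁅a, b ^ n⁆ a := by rw [h1]; exact ha.pow_left n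
  rw [comm_pow_left a (b ^ n) h2 n, h1, ← pow_mul, sq]

/-- Let `G` be a group, `k ≥ 1`, `α ∈ G` and `β ∈ C_{k-1}(G)` (lower central series, with
`C_0(G) = G` and `C_{k+1}(G) = [C_k(G), G]`).  Then for every positive integer `l` there is
`h ∈ C_{k+1}(G)` with `[α^l, β^l] = [α, β]^(l²) · h`. -/
theorem commutator_pow_mem_lowerCentralSeries {G : Type*} [Group G] (k : ℕ) (hk : 1 ≤ k)
    (α β : G) (hβ : β ∈ (⊤ : Subgroup G).lowerCentralSeries (k - 1)) (l : ℕ) (hl : 0 < l) :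
    ∃ h ∈ (⊤ : Subgroup G).lowerCentralSeries (k + 1), ⁅α ^ l, β ^ l⁆ = ⁅α, β⁆ ^ (l ^ 2) * h := by
  -- ⁅α, β⁆ ∈ C_k
  have hc : ⁅α, β⁆ ∈ (⊤ : Subgroup G).lowerCentralSeries k := by
    have hβα : ⁅β, α⁆ ∈ (⊤ : Subgroup G).lowerCentralSeries k := by
      have : k = (k - 1) + 1 := (Nat.succ_pred_eq_of_pos hk).symm
      rw [this, Subgroup.lowerCentralSeries_succ]
      exact Subgroup.commutator_mem_commutator hβ (Subgroup.mem_top α)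
    simpa [commutatorElement_inv] using ((⊤ : Subgroup G).lowerCentralSeries k).inv_mem hβα
  set N := (⊤ : Subgroup G).lowerCentralSeries (k + 1) with hN
  let f := QuotientGroup.mk' N
  have hker : ∀ g : G, g ∈ N → f g = 1 := fun g hg => (QuotientGroup.eq_one_iff g).mpr hg
  have hca : ⁅⁅α, β⁆, α⁆ ∈ N := by
    rw [hN, Subgroup.lowerCentralSeries_succ]
    exact Subgroup.commutator_mem_commutator hc (Subgroup.mem_top α)
  have hcb : ⁅⁅α, β⁆, β⁆ ∈ N := by
    rw [hN, Subgroup.lowerCentralSeries_succ]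
    exact Subgroup.commutator_mem_commutator hc (Subgroup.mem_top β)
  have ca : Commute ⁅f α, f β⁆ (f α) := by
    rw [← commutatorElement_eq_one_iff_commute, ← map_commutatorElement,
      ← map_commutatorElement]
    exact hker _ hca
  have cb : Commute ⁅f α, f β⁆ (f β) := by
    rw [← commutatorElement_eq_one_iff_commute, ← map_commutatorElement,
      ← map_commutatorElement]
    exact hker _ hcb
  refine ⟨(⁅α, β⁆ ^ (l ^ 2))⁻¹ * ⁅α ^ l, β ^ l⁆, ?_, by group⟩
  apply (QuotientGroup.eq_one_iff _).mp
  show f _ = 1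
  rw [map_mul, map_inv, map_pow, map_commutatorElement,
    map_commutatorElement, map_pow, map_pow]
  rw [comm_pow_pow (f α) (f β) ca cb l]
  group
end

section
/- Let k be a positive integer, let E be k-dimensional real Euclidean space, and let G be a nilpotent subgroup of the group of bijective isometries of E (under composition). Then two elements f, g ∈ G commute (f ∘ g = g ∘ f) if and only if their linear parts L_f and L_g commute (L_f ∘ L_g = L_g ∘ L_f). -/
open scoped RealInnerProductSpace commutatorElement

namespace IsomCommAux

variable {E : Type*} [NormedAddCommGroup E] [InnerProductSpace ℝ E]

/-- An isometry of a real normed space is affine: `h (x + y) = h x + (h y - h 0)`. -/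
lemma isom_apply_add (h : E ≃ᵢ E) (x y : E) : h (x + y) = h x + (h y - h 0) := by
  have h1 := map_add h.toRealLinearIsometryEquiv x y
  simp only [IsometryEquiv.toRealLinearIsometryEquiv_apply] at h1
  calc h (x + y) = (h (x + y) - h 0) + h 0 := by abel
    _ = ((h x - h 0) + (h y - h 0)) + h 0 := by rw [h1]
    _ = h x + (h y - h 0) := by abel

lemma isom_linear_sub (h : E ≃ᵢ E) (a b : E) :
    h (a - b) - h 0 = (h a - h 0) - (h b - h 0) := by
  have h1 := map_sub h.toRealLinearIsometryEquiv a b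
  simpa only [IsometryEquiv.toRealLinearIsometryEquiv_apply] using h1

/-- If a linear isometry fixes `A u - u`, then it fixes `u`. -/
lemma fixed_of_sub_fixed (A : E ≃ₗᵢ[ℝ] E) (u : E) (h : A (A u - u) = A u - u) :
    A u = u := by
  have h1 : ⟪A u, A u - u⟫ = ⟪u, A u - u⟫ := by
    calc ⟪A u, A u - u⟫ = ⟪A u, A (A u - u)⟫ := by rw [h]
      _ = ⟪u, A u - u⟫ := A.inner_map_map u (A u - u)
  have h2 : ⟪A u - u, A u - u⟫ = (0 : ℝ) := by
    rw [inner_sub_left, h1]; ring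
  have := inner_self_eq_zero.mp h2
  rwa [sub_eq_zero] at this

/-- Key lemma: in a nilpotent group of isometries, the linear part of any element fixes
the translation vector of any translation lying in the commutator subgroup. -/
lemma linear_fixes_translation
    (G : Subgroup (E ≃ᵢ E)) (hG : Group.IsNilpotent G)
    (h : E ≃ᵢ E) (hh : h ∈ G)
    (c : E ≃ᵢ E) (hc : c ∈ G)
    (hcl : (⟨c, hc⟩ : G) ∈ Subgroup.lowerCentralSeries (⊤ : Subgroup G) 1)
    (v : E) (hcv : ∀ x, c x = x + v) : h v - h 0 = v := by
  set A : E ≃ₗᵢ[ℝ] E := h.toRealLinearIsometryEquiv with hA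
  have hAapp : ∀ u : E, A u = h u - h 0 := fun u =>
    IsometryEquiv.toRealLinearIsometryEquiv_apply h u
  -- the sequence of translation vectors
  set T : E → E := fun u => u - A u with hT
  set w : ℕ → E := fun n => T^[n] v with hw
  have hw0 : w 0 = v := rfl
  have hwsucc : ∀ n, w (n + 1) = w n - A (w n) := fun n => by
    simp only [hw, Function.iterate_succ_apply', hT]
  -- the sequence of iterated commutators
  set d : ℕ → G := fun n => (fun x : G => ⁅x, (⟨h, hh⟩ : G)⁆)^[n] ⟨c, hc⟩ with hd
  have hd0 : d 0 = ⟨c, hc⟩ := rfl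
  have hdsucc : ∀ n, d (n + 1) = ⁅d n, (⟨h, hh⟩ : G)⁆ := fun n => by
    simp only [hd, Function.iterate_succ_apply']
  -- each d n lies deep in the lower central series
  have hmem : ∀ n, d n ∈ Subgroup.lowerCentralSeries (⊤ : Subgroup G) (n + 1) := by
    intro n
    induction n with
    | zero => exact hcl
    | succ n ih =>
      rw [hdsucc, lowerCentralSeries_succ]
      exact Subgroup.commutator_mem_commutator ih (Subgroup.mem_top _)
  -- each d n is translation by w n
  have htrans : ∀ n, ∀ x : E, ((d n : G) : E ≃ᵢ E) x = x + w n := by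
    intro n
    induction n with
    | zero => intro x; rw [hd0]; exact hcv x
    | succ n ih =>
      intro x
      have hDinv : ∀ y : E, (((d n : G) : E ≃ᵢ E))⁻¹ y = y - w n := by
        intro y
        apply ((d n : G) : E ≃ᵢ E).injective
        rw [IsometryEquiv.apply_inv_self, ih, sub_add_cancel]
      have hcoe : ((d (n + 1) : G) : E ≃ᵢ E) x
          = ((d n : G) : E ≃ᵢ E) (h ((((d n : G) : E ≃ᵢ E))⁻¹ (h⁻¹ x))) := by
        rw [hdsucc]; rfl
      rw [hcoe, hDinv (h⁻¹ x)]
      have h2 : h (h⁻¹ x - w n) = h (h⁻¹ x) + (h (-w n) - h 0) := by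
        have := isom_apply_add h (h⁻¹ x) (-w n)
        simpa [sub_eq_add_neg] using this
      rw [h2, IsometryEquiv.apply_inv_self]
      have hAneg : h (-w n) - h 0 = -(A (w n)) := by
        rw [← hAapp, map_neg]
      rw [hAneg, ih, hwsucc]
      abel
  -- nilpotency forces some w N = 0
  obtain ⟨N, hN⟩ := nilpotent_iff_lowerCentralSeries.mp hG
  have hdN : d N = 1 := by
    have h1 : d N ∈ Subgroup.lowerCentralSeries (⊤ : Subgroup G) N :=
      lowerCentralSeries_antitone ⊤ (Nat.le_succ N) (hmem N)
    rw [hN] at h1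
    exact h1
  have hwN : w N = 0 := by
    have h3 := htrans N 0
    rw [hdN] at h3
    simpa using h3.symm
  -- from w N = 0 deduce the result
  have key : ∀ m, w (m + 1) = 0 → w 1 = 0 := by
    intro m
    induction m with
    | zero => exact id
    | succ m ih =>
      intro hm2
      have h1 : A (w (m + 1)) = w (m + 1) := by
        have h4 := hwsucc (m + 1)
        rw [hm2] at h4
        exact (sub_eq_zero.mp h4.symm).symm
      have h5 : w (m + 1) = -(A (w m) - w m) := by rw [hwsucc]; abel
      have h6 : A (A (w m) - w m) = A (w m) - w m := by
        have := h1
        rw [h5, map_neg, neg_inj] at this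
        exact this
      have h7 : A (w m) = w m := fixed_of_sub_fixed A (w m) h6
      have h8 : w (m + 1) = 0 := by rw [hwsucc, h7, sub_self]
      exact ih h8
  -- conclude
  have hgoal : A v = v := by
    cases N with
    | zero =>
      have hv0 : v = 0 := by rw [← hw0, hwN]
      rw [hv0, map_zero]
    | succ m =>
      have h9 : w 1 = 0 := key m hwN
      have h10 := hwsucc 0
      rw [h9, hw0] at h10
      exact (sub_eq_zero.mp h10.symm).symm
  rw [← hAapp]; exact hgoal

end IsomCommAux

/-- Let `E` be `k`-dimensional real Euclidean space (`k ≥ 1`) and `G` a nilpotent subgroup of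
the group of bijective isometries of `E` (under composition).  Then `f, g ∈ G` commute if and
only if their linear parts `L_f : x ↦ f x - f 0` and `L_g : x ↦ g x - g 0` commute. -/
theorem isometry_commute_iff_linear_parts_commute (k : ℕ) (hk : 0 < k)
    (G : Subgroup (EuclideanSpace ℝ (Fin k) ≃ᵢ EuclideanSpace ℝ (Fin k)))
    (hG : Group.IsNilpotent G)
    (f g : EuclideanSpace ℝ (Fin k) ≃ᵢ EuclideanSpace ℝ (Fin k)) (hf : f ∈ G) (hg : g ∈ G) :
    f * g = g * f ↔
      (fun x => f x - f 0) ∘ (fun x => g x - g 0) =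
        (fun x => g x - g 0) ∘ (fun x => f x - f 0) := by
  set E := EuclideanSpace ℝ (Fin k)
  open IsomCommAux in
  -- rewrite the composite linear parts
  have hL : ∀ (h₁ h₂ : E ≃ᵢ E) (x : E),
      ((fun x => h₁ x - h₁ 0) ∘ (fun x => h₂ x - h₂ 0)) x = h₁ (h₂ x) - h₁ (h₂ 0) := by
    intro h₁ h₂ x
    show h₁ (h₂ x - h₂ 0) - h₁ 0 = h₁ (h₂ x) - h₁ (h₂ 0)
    rw [IsomCommAux.isom_linear_sub h₁ (h₂ x) (h₂ 0)]
    abel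
  constructor
  · intro hfg
    funext x
    rw [hL f g x, hL g f x]
    have h1 : f (g x) = g (f x) := congrArg (fun e : E ≃ᵢ E => e x) hfg
    have h2 : f (g 0) = g (f 0) := congrArg (fun e : E ≃ᵢ E => e 0) hfg
    rw [h1, h2]
  · intro hLL
    have hAB : ∀ x : E, f (g x) - f (g 0) = g (f x) - g (f 0) := by
      intro x
      have := congrFun hLL x
      rwa [hL f g x, hL g f x] at this
    set v : E := f (g 0) - g (f 0) with hv
    have hfg' : ∀ x : E, f (g x) = g (f x) + v := by
      intro x
      have := hAB x
      rw [hv]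
      calc f (g x) = (f (g x) - f (g 0)) + f (g 0) := by abel
        _ = (g (f x) - g (f 0)) + f (g 0) := by rw [this]
        _ = g (f x) + (f (g 0) - g (f 0)) := by abel
    have hcG : ⁅f, g⁆ ∈ G := by
      rw [commutatorElement_def]
      exact mul_mem (mul_mem (mul_mem hf hg) (inv_mem hf)) (inv_mem hg)
    have hcl : (⟨⁅f, g⁆, hcG⟩ : G) ∈ Subgroup.lowerCentralSeries (⊤ : Subgroup G) 1 := by
      rw [lowerCentralSeries_one, commutator_def]
      have heq : (⟨⁅f, g⁆, hcG⟩ : G) = ⁅(⟨f, hf⟩ : G), (⟨g, hg⟩ : G)⁆ := rfl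
      rw [heq]
      exact Subgroup.commutator_mem_commutator (Subgroup.mem_top _) (Subgroup.mem_top _)
    have hcv : ∀ x : E, ⁅f, g⁆ x = x + v := by
      intro x
      have h0 : ⁅f, g⁆ x = f (g (f⁻¹ (g⁻¹ x))) := rfl
      rw [h0, hfg' (f⁻¹ (g⁻¹ x)), IsometryEquiv.apply_inv_self, IsometryEquiv.apply_inv_self]
    have hAv : f v - f 0 = v :=
      IsomCommAux.linear_fixes_translation G hG f hf ⁅f, g⁆ hcG hcl v hcv
    have hBv : g v - g 0 = v :=
      IsomCommAux.linear_fixes_translation G hG g hg ⁅f, g⁆ hcG hcl v hcv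
    -- now show v = 0 using inner products
    set A : E ≃ₗᵢ[ℝ] E := f.toRealLinearIsometryEquiv with hA
    set B : E ≃ₗᵢ[ℝ] E := g.toRealLinearIsometryEquiv with hB
    have hAapp : ∀ u : E, A u = f u - f 0 := fun u =>
      IsometryEquiv.toRealLinearIsometryEquiv_apply f u
    have hBapp : ∀ u : E, B u = g u - g 0 := fun u =>
      IsometryEquiv.toRealLinearIsometryEquiv_apply g u
    have hAv' : A v = v := by rw [hAapp]; exact hAv
    have hBv' : B v = v := by rw [hBapp]; exact hBv
    have hvdec : v = (A (g 0) - g 0) - (B (f 0) - f 0) := by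
      rw [hAapp, hBapp, hv]; abel
    have e1 : ⟪A (g 0), v⟫ = ⟪g 0, v⟫ := by
      calc ⟪A (g 0), v⟫ = ⟪A (g 0), A v⟫ := by rw [hAv']
        _ = ⟪g 0, v⟫ := A.inner_map_map (g 0) v
    have e2 : ⟪B (f 0), v⟫ = ⟪f 0, v⟫ := by
      calc ⟪B (f 0), v⟫ = ⟪B (f 0), B v⟫ := by rw [hBv']
        _ = ⟪f 0, v⟫ := B.inner_map_map (f 0) v
    have hvz : ⟪v, v⟫ = (0 : ℝ) := by
      nth_rewrite 1 [hvdec]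
      rw [inner_sub_left, inner_sub_left, inner_sub_left, e1, e2]
      ring
    have hv0 : v = 0 := inner_self_eq_zero.mp hvz
    refine IsometryEquiv.ext fun x => ?_
    show f (g x) = g (f x)
    rw [hfg' x, hv0, add_zero]
end

section
/- Let Γ be a group acting by isometries on a metric space X, let x ∈ X, and suppose there exists R₀ > 0 such that: (H1) every γ ∈ Γ with d(γ·x, x) ≥ R₀ satisfies d(γ²·x, x) ≥ 1.9 · d(γ·x, x); and (H2) for every element γ ∈ Γ of infinite order and every R > 0 there exists N such that d(γⁿ·x, x) ≥ R for all n ≥ N. Let k ≥ 1 be an integer. If C_{k+1}(Γ) is finite, then for every α ∈ Γ and every β ∈ C_{k-1}(Γ), the commutator [α, β] has finite order. -/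
open scoped commutatorElement

/-- If the commutator `⁅a,b⁆` commutes with `b`, then `⁅a, b^n⁆ = ⁅a,b⁆^n`. -/
private lemma comm_pow_right_aux {G : Type*} [Group G] (a b : G)
    (hb : Commute ⁅a, b⁆ b) (n : ℕ) : ⁅a, b ^ n⁆ = ⁅a, b⁆ ^ n := by
  have h1 : a * b * a⁻¹ = ⁅a, b⁆ * b := by
    rw [commutatorElement_def]; group
  have key : a * b ^ n * a⁻¹ = ⁅a, b⁆ ^ n * b ^ n := by
    rw [← conj_pow, h1, hb.mul_pow]
  rw [commutatorElement_def, key, mul_assoc, mul_inv_cancel, mul_one]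

/-- If the commutator `⁅a,b⁆` commutes with both `a` and `b`, then
`⁅a^m, b^n⁆ = ⁅a,b⁆^(m*n)`. -/
private lemma comm_pow_pow_aux {G : Type*} [Group G] (a b : G)
    (ha : Commute ⁅a, b⁆ a) (hb : Commute ⁅a, b⁆ b) (m n : ℕ) :
    ⁅a ^ m, b ^ n⁆ = ⁅a, b⁆ ^ (m * n) := by
  have h1 : ⁅a, b ^ n⁆ = ⁅a, b⁆ ^ n := comm_pow_right_aux a b hb n
  have h2 : ⁅b ^ n, a⁆ = (⁅a, b⁆ ^ n)⁻¹ := by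
    rw [← commutatorElement_inv, h1]
  have hcomm : Commute ⁅b ^ n, a⁆ a := by
    rw [h2]; exact ((ha.pow_left n).inv_left)
  have h3 : ⁅b ^ n, a ^ m⁆ = ((⁅a, b⁆ ^ n)⁻¹) ^ m := by
    rw [comm_pow_right_aux (b ^ n) a hcomm m, h2]
  calc ⁅a ^ m, b ^ n⁆ = ⁅b ^ n, a ^ m⁆⁻¹ := (commutatorElement_inv _ _).symm
    _ = (((⁅a, b⁆ ^ n)⁻¹) ^ m)⁻¹ := by rw [h3]
    _ = ⁅a, b⁆ ^ (m * n) := by rw [inv_pow, inv_inv, ← pow_mul, mul_comm n m]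

/-- Let `Γ` act by isometries on a metric space `X`, `x ∈ X`, and suppose there is `R₀ > 0`
such that (H1) every `γ` with `d(γx, x) ≥ R₀` satisfies `d(γ²x, x) ≥ 1.9 · d(γx, x)`, and
(H2) for every `γ` of infinite order and every `R > 0` there is `N` with `d(γⁿx, x) ≥ R`
for all `n ≥ N`.  Let `k ≥ 1`.  If `C_{k+1}(Γ)` is finite, then for all `α ∈ Γ` and
`β ∈ C_{k-1}(Γ)`, the commutator `[α, β]` has finite order. -/
theorem commutator_isOfFinOrder_of_finite_lcs {Γ X : Type*} [Group Γ] [MetricSpace X]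
    [MulAction Γ X] (hiso : ∀ γ : Γ, Isometry (fun y : X => γ • y)) (x : X)
    (R₀ : ℝ) (hR₀ : 0 < R₀)
    (H1 : ∀ γ : Γ, R₀ ≤ dist (γ • x) x → 1.9 * dist (γ • x) x ≤ dist ((γ ^ 2) • x) x)
    (H2 : ∀ γ : Γ, ¬ IsOfFinOrder γ → ∀ R : ℝ, 0 < R →
      ∃ N : ℕ, ∀ n ≥ N, R ≤ dist ((γ ^ n) • x) x)
    (k : ℕ) (hk : 1 ≤ k) (hfin : Finite (Subgroup.lowerCentralSeries (⊤ : Subgroup Γ) (k + 1)))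
    (α β : Γ) (hβ : β ∈ Subgroup.lowerCentralSeries (⊤ : Subgroup Γ) (k - 1)) :
    IsOfFinOrder ⁅α, β⁆ := by
  classical
  set g : Γ := ⁅α, β⁆ with hg_def
  -- the displacement function
  set D : Γ → ℝ := fun γ => dist (γ • x) x with hD_def
  have hD_nonneg : ∀ γ, 0 ≤ D γ := fun γ => dist_nonneg
  have hD_mul : ∀ γ δ : Γ, D (γ * δ) ≤ D γ + D δ := by
    intro γ δ
    have h1 : dist ((γ * δ) • x) (γ • x) = dist (δ • x) x := by
      rw [mul_smul]; exact (hiso γ).dist_eq (δ • x) x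
    calc D (γ * δ) ≤ dist ((γ * δ) • x) (γ • x) + dist (γ • x) x := dist_triangle _ _ _
      _ = D δ + D γ := by rw [h1]
      _ = D γ + D δ := by ring
  have hD_inv : ∀ γ : Γ, D γ⁻¹ = D γ := by
    intro γ
    have : dist (γ • (γ⁻¹ • x)) (γ • x) = dist (γ⁻¹ • x) x := (hiso γ).dist_eq _ _
    rw [smul_inv_smul] at this
    simpa [hD_def, dist_comm] using this.symm
  have hD_pow : ∀ (γ : Γ) (n : ℕ), D (γ ^ n) ≤ n * D γ := by
    intro γ n
    induction n with
    | zero => simp [hD_def]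
    | succ n ih =>
      calc D (γ ^ (n + 1)) = D (γ ^ n * γ) := by rw [pow_succ]
        _ ≤ D (γ ^ n) + D γ := hD_mul _ _
        _ ≤ n * D γ + D γ := by linarith
        _ = (n + 1 : ℕ) * D γ := by push_cast; ring
  have hD_comm : ∀ a b : Γ, D ⁅a, b⁆ ≤ 2 * D a + 2 * D b := by
    intro a b
    calc D ⁅a, b⁆ = D (a * b * a⁻¹ * b⁻¹) := by rw [commutatorElement_def]
      _ ≤ D (a * b * a⁻¹) + D b⁻¹ := hD_mul _ _
      _ ≤ (D (a * b) + D a⁻¹) + D b⁻¹ := by linarith [hD_mul (a * b) a⁻¹]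
      _ ≤ ((D a + D b) + D a⁻¹) + D b⁻¹ := by linarith [hD_mul a b]
      _ = 2 * D a + 2 * D b := by rw [hD_inv, hD_inv]; ring
  -- g ∈ C_k
  have hgk : g ∈ Subgroup.lowerCentralSeries (⊤ : Subgroup Γ) k := by
    obtain ⟨k', rfl⟩ : ∃ k', k = k' + 1 := ⟨k - 1, (Nat.succ_pred_eq_of_pos hk).symm⟩
    have hβ' : β ∈ Subgroup.lowerCentralSeries (⊤ : Subgroup Γ) k' := by simpa using hβ
    have : ⁅β, α⁆ ∈ Subgroup.lowerCentralSeries (⊤ : Subgroup Γ) (k' + 1) := by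
      rw [Subgroup.lowerCentralSeries_succ]
      exact Subgroup.subset_closure ⟨β, hβ', α, trivial, by rw [commutatorElement_def]⟩
    have := (Subgroup.lowerCentralSeries (⊤ : Subgroup Γ) (k' + 1)).inv_mem this
    rwa [commutatorElement_inv] at this
  -- commutators of g with anything lie in C_{k+1}
  have hcent : ∀ γ : Γ, ⁅g, γ⁆ ∈ Subgroup.lowerCentralSeries (⊤ : Subgroup Γ) (k + 1) := by
    intro γ
    rw [Subgroup.lowerCentralSeries_succ]
    exact Subgroup.subset_closure ⟨g, hgk, γ, trivial, by rw [commutatorElement_def]⟩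
  -- key algebraic fact: g^(m*m) * ⁅α^m, β^m⁆⁻¹ ∈ C_{k+1}
  have hkey : ∀ m : ℕ, g ^ (m * m) * ⁅α ^ m, β ^ m⁆⁻¹ ∈ Subgroup.lowerCentralSeries (⊤ : Subgroup Γ) (k + 1) := by
    intro m
    set Q := Γ ⧸ Subgroup.lowerCentralSeries (⊤ : Subgroup Γ) (k + 1)
    set π : Γ →* Q := QuotientGroup.mk' (Subgroup.lowerCentralSeries (⊤ : Subgroup Γ) (k + 1)) with hπ
    have hcomm : ∀ γ : Γ, Commute ⁅π α, π β⁆ (π γ) := by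
      intro γ
      rw [← commutatorElement_eq_one_iff_commute]
      have : π ⁅⁅α, β⁆, γ⁆ = 1 := by
        rw [← MonoidHom.mem_ker, QuotientGroup.ker_mk']
        exact hcent γ
      simpa [map_commutatorElement] using this
    have h1 : π (g ^ (m * m) * ⁅α ^ m, β ^ m⁆⁻¹) = 1 := by
      have h2 : ⁅(π α) ^ m, (π β) ^ m⁆ = ⁅π α, π β⁆ ^ (m * m) :=
        comm_pow_pow_aux (π α) (π β) (hcomm α) (hcomm β) m m
      have h5 : π ⁅α ^ m, β ^ m⁆ = π (g ^ (m * m)) := by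
        rw [map_commutatorElement, map_pow, map_pow, h2, hg_def, map_pow,
          map_commutatorElement]
      rw [map_mul, map_inv, ← h5, mul_inv_cancel]
    rwa [← QuotientGroup.ker_mk' (Subgroup.lowerCentralSeries (⊤ : Subgroup Γ) (k + 1)), MonoidHom.mem_ker]
  -- bound on displacements of the finite group C_{k+1}
  obtain ⟨z₀, hz₀⟩ := Finite.exists_max (fun z : Subgroup.lowerCentralSeries (⊤ : Subgroup Γ) (k + 1) => D (z : Γ))
  set C : ℝ := max (D (z₀ : Γ)) 0 with hC_def
  have hC0 : 0 ≤ C := le_max_right _ _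
  have hC : ∀ z ∈ Subgroup.lowerCentralSeries (⊤ : Subgroup Γ) (k + 1), D z ≤ C :=
    fun z hz => le_trans (hz₀ ⟨z, hz⟩) (le_max_left _ _)
  set A : ℝ := D α with hA_def
  set B : ℝ := D β with hB_def
  -- upper bound : D (g^(m*m)) ≤ C + 2*m*(A+B)
  have hupper : ∀ m : ℕ, D (g ^ (m * m)) ≤ C + 2 * m * (A + B) := by
    intro m
    have h1 : g ^ (m * m) = (g ^ (m * m) * ⁅α ^ m, β ^ m⁆⁻¹) * ⁅α ^ m, β ^ m⁆ := by group
    calc D (g ^ (m * m)) = D ((g ^ (m * m) * ⁅α ^ m, β ^ m⁆⁻¹) * ⁅α ^ m, β ^ m⁆) := by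
          rw [← h1]
      _ ≤ D (g ^ (m * m) * ⁅α ^ m, β ^ m⁆⁻¹) + D ⁅α ^ m, β ^ m⁆ := hD_mul _ _
      _ ≤ C + (2 * D (α ^ m) + 2 * D (β ^ m)) := by
          have := hC _ (hkey m)
          have := hD_comm (α ^ m) (β ^ m)
          linarith
      _ ≤ C + 2 * m * (A + B) := by
          have h2 := hD_pow α m
          have h3 := hD_pow β m
          rw [← hA_def] at h2; rw [← hB_def] at h3
          linarith
  -- now argue by contradiction
  by_contra hg
  obtain ⟨N, hN⟩ := H2 g hg R₀ hR₀
  set n : ℕ := N + 1 with hn_def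
  -- lower bound by iterated doubling
  have hlow : ∀ (j : ℕ) (t : ℕ), N ≤ t → 1.9 ^ j * R₀ ≤ D (g ^ (t * 2 ^ j)) := by
    intro j
    induction j with
    | zero => intro t ht; simpa using hN t ht
    | succ j ih =>
      intro t ht
      have ht' : N ≤ t * 2 ^ j := le_trans ht (Nat.le_mul_of_pos_right t (Nat.pow_pos (n := j) (by norm_num)))
      have h1 : R₀ ≤ D (g ^ (t * 2 ^ j)) := hN _ ht'
      have h2 := H1 (g ^ (t * 2 ^ j)) h1
      have h3 : (g ^ (t * 2 ^ j)) ^ 2 = g ^ (t * 2 ^ (j + 1)) := by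
        rw [← pow_mul]; ring_nf
      rw [h3] at h2
      have h4 := ih t ht
      calc 1.9 ^ (j + 1) * R₀ = 1.9 * (1.9 ^ j * R₀) := by ring
        _ ≤ 1.9 * D (g ^ (t * 2 ^ j)) := by nlinarith
        _ ≤ D (g ^ (t * 2 ^ (j + 1))) := h2
  -- combine at m = n * 2^j
  have hcomb : ∀ j : ℕ, 3.61 ^ j * R₀ ≤ C + 2 * n * (A + B) * 2 ^ j := by
    intro j
    have hnn : N ≤ n * n := by
      calc N ≤ n := Nat.le_succ N
        _ ≤ n * n := Nat.le_mul_of_pos_right n (by omega)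
    have h1 := hlow (2 * j) (n * n) hnn
    have h2 := hupper (n * 2 ^ j)
    have hm : (n * 2 ^ j) * (n * 2 ^ j) = n * n * 2 ^ (2 * j) := by ring
    rw [hm] at h2
    have h3 : (1.9 : ℝ) ^ (2 * j) = 3.61 ^ j := by
      rw [pow_mul]; norm_num
    rw [h3] at h1
    have h4 : (2 : ℝ) * (n * 2 ^ j : ℕ) * (A + B) = 2 * n * (A + B) * 2 ^ j := by
      push_cast; ring
    rw [h4] at h2
    linarith
  -- derive contradiction
  set E : ℝ := C + 2 * n * (A + B) with hE_def
  have hE0 : 0 ≤ E := by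
    have hA0 : 0 ≤ A := hD_nonneg α
    have hB0 : 0 ≤ B := hD_nonneg β
    have : (0 : ℝ) ≤ (n : ℝ) := Nat.cast_nonneg n
    positivity
  have hfinal : ∀ j : ℕ, R₀ * 1.805 ^ j ≤ E := by
    intro j
    have h1 := hcomb j
    have h2 : C + 2 * n * (A + B) * 2 ^ j ≤ E * 2 ^ j := by
      have h2j : (1 : ℝ) ≤ 2 ^ j := one_le_pow₀ (by norm_num)
      have hA0 : 0 ≤ A := hD_nonneg α
      have hB0 : 0 ≤ B := hD_nonneg β
      rw [hE_def]
      nlinarith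
    have h3 : 3.61 ^ j * R₀ ≤ E * 2 ^ j := le_trans h1 h2
    have h4 : (3.61 : ℝ) ^ j = 1.805 ^ j * 2 ^ j := by
      rw [← mul_pow]; norm_num
    rw [h4] at h3
    have h2jpos : (0 : ℝ) < 2 ^ j := by positivity
    nlinarith
  obtain ⟨j, hj⟩ := pow_unbounded_of_one_lt (E / R₀) (by norm_num : (1 : ℝ) < 1.805)
  have : E < R₀ * 1.805 ^ j := by
    rw [div_lt_iff₀ hR₀] at hj
    linarith [hj]
  linarith [hfinal j]
end

section
/- Let Γ be a finitely generated nilpotent group acting by isometries on a metric space X, let x ∈ X, and suppose there exists R₀ > 0 such that: (H1) every γ ∈ Γ with d(γ·x, x) ≥ R₀ satisfies d(γ²·x, x) ≥ 1.9 · d(γ·x, x); and (H2) for every element γ ∈ Γ of infinite order and every R > 0 there exists N such that d(γⁿ·x, x) ≥ R for all n ≥ N. Then for every integer k ≥ 1, if C_{k+1}(Γ) is finite, then C_k(Γ) is also finite. -/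
open Subgroup
open scoped commutatorElement

section AuxGroup

variable {G : Type*} [Group G]

private lemma lcs_succ' (G : Type*) [Group G] (n : ℕ) :
    Subgroup.lowerCentralSeries (⊤ : Subgroup G) (n + 1) = ⁅Subgroup.lowerCentralSeries (⊤ : Subgroup G) n, ⊤⁆ := rfl

private lemma isOfFinOrder_of_map {H : Type*} [Group H] (f : G →* H)
    (hf : Function.Injective f) {x : G} (h : IsOfFinOrder (f x)) : IsOfFinOrder x := by
  rw [isOfFinOrder_iff_pow_eq_one] at h ⊢
  obtain ⟨n, hn, hx⟩ := h
  exact ⟨n, hn, hf (by rw [map_pow, hx, map_one])⟩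

private lemma conj_pow_of_comm {a b : G} (h : ∀ g, Commute ⁅a, b⁆ g) :
    ∀ n : ℕ, a ^ n * b * (a ^ n)⁻¹ = ⁅a, b⁆ ^ n * b
  | 0 => by simp
  | n + 1 => by
    have h1 : a ^ (n + 1) * b * (a ^ (n + 1))⁻¹ = a * (a ^ n * b * (a ^ n)⁻¹) * a⁻¹ := by
      rw [pow_succ']; group
    rw [h1, conj_pow_of_comm h n]
    have key : a * ⁅a, b⁆ ^ n = ⁅a, b⁆ ^ n * a := (((h a).pow_left n).eq).symm
    calc a * (⁅a, b⁆ ^ n * b) * a⁻¹ = a * ⁅a, b⁆ ^ n * b * a⁻¹ := by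
          simp [mul_assoc]
      _ = ⁅a, b⁆ ^ n * a * b * a⁻¹ := by rw [key]
      _ = ⁅a, b⁆ ^ n * (a * b * a⁻¹) := by simp [mul_assoc]
      _ = ⁅a, b⁆ ^ n * (⁅a, b⁆ * b) := by congr 1; group
      _ = ⁅a, b⁆ ^ (n + 1) * b := by rw [pow_succ, mul_assoc]

private lemma commutator_pow_pow {a b : G} (h : ∀ g, Commute ⁅a, b⁆ g) (n : ℕ) :
    ⁅a ^ n, b ^ n⁆ = ⁅a, b⁆ ^ (n * n) := by
  have h1 : a ^ n * b ^ n * (a ^ n)⁻¹ = (⁅a, b⁆ ^ n * b) ^ n := by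
    rw [← conj_pow, conj_pow_of_comm h n]
  have h2 : (⁅a, b⁆ ^ n * b) ^ n = ⁅a, b⁆ ^ (n * n) * b ^ n := by
    rw [((h b).pow_left n).mul_pow, ← pow_mul]
  calc ⁅a ^ n, b ^ n⁆ = a ^ n * b ^ n * (a ^ n)⁻¹ * (b ^ n)⁻¹ := commutatorElement_def _ _
    _ = (⁅a, b⁆ ^ n * b) ^ n * (b ^ n)⁻¹ := by rw [h1]
    _ = ⁅a, b⁆ ^ (n * n) * b ^ n * (b ^ n)⁻¹ := by rw [h2]
    _ = ⁅a, b⁆ ^ (n * n) := by group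

end AuxGroup

section AuxFinite

private lemma map_subtype_lcs_le {G : Type*} [Group G] (H : Subgroup G) (m : ℕ)
    (hH : H ≤ Subgroup.lowerCentralSeries (⊤ : Subgroup G) m) :
    ∀ n, Subgroup.map H.subtype (Subgroup.lowerCentralSeries (⊤ : Subgroup ↥H) n) ≤ Subgroup.lowerCentralSeries (⊤ : Subgroup G) (m + n)
  | 0 => by
    rw [Nat.add_zero, Subgroup.lowerCentralSeries_zero, ← MonoidHom.range_eq_map, H.range_subtype]
    exact hH
  | n + 1 => by
    rw [lcs_succ' ↥H n, Subgroup.map_commutator]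
    calc ⁅Subgroup.map H.subtype (Subgroup.lowerCentralSeries (⊤ : Subgroup ↥H) n), Subgroup.map H.subtype ⊤⁆
        ≤ ⁅Subgroup.lowerCentralSeries (⊤ : Subgroup G) (m + n), ⊤⁆ :=
          Subgroup.commutator_mono (map_subtype_lcs_le H m hH n) le_top
      _ = Subgroup.lowerCentralSeries (⊤ : Subgroup G) (m + n + 1) := (lcs_succ' G (m + n)).symm

universe u

private lemma finite_aux :
    ∀ (c : ℕ) (G : Type u) [Group G] [Group.FG G] [Group.IsNilpotent G],
      Group.nilpotencyClass G ≤ c → (∀ g : G, IsOfFinOrder g) → Finite G := by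
  intro c
  induction c with
  | zero =>
    intro G _ _ _ hc _
    have : Subsingleton G :=
      Group.nilpotencyClass_zero_iff_subsingleton.mp (Nat.le_zero.mp hc)
    exact Finite.of_subsingleton
  | succ c ih =>
    intro G _ _ _ hc htor
    have hsurj : Function.Surjective (Abelianization.of (G := G)) :=
      QuotientGroup.mk_surjective
    have habfg : Group.FG (Abelianization G) := Group.fg_of_surjective hsurj
    have habtor : Monoid.IsTorsion (Abelianization G) := by
      intro g
      obtain ⟨y, rfl⟩ := hsurj g
      exact Abelianization.of.isOfFinOrder (htor y)
    have hfinab : Finite (Abelianization G) := CommGroup.finite_of_fg_torsion _ habtor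
    have hfinq : Finite (G ⧸ commutator G) := hfinab
    have hFI : (commutator G).FiniteIndex := Subgroup.finiteIndex_of_finite_quotient
    have hfg' : Group.FG ↥(commutator G) := Subgroup.fg_of_index_ne_zero _
    have hlcs : Subgroup.lowerCentralSeries (⊤ : Subgroup G) (c + 1) = ⊥ :=
      Subgroup.lowerCentralSeries_eq_bot_iff_nilpotencyClass_le.mpr hc
    have hmap := map_subtype_lcs_le (commutator G) 1 le_rfl c
    rw [Nat.add_comm 1 c, hlcs] at hmap
    have hbot : Subgroup.lowerCentralSeries (⊤ : Subgroup ↥(commutator G)) c = ⊥ := by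
      have h2 : Subgroup.map (commutator G).subtype (Subgroup.lowerCentralSeries (⊤ : Subgroup ↥(commutator G)) c) = ⊥ :=
        le_bot_iff.mp hmap
      rwa [Subgroup.map_eq_bot_iff, Subgroup.ker_subtype, le_bot_iff] at h2
    have hclass : Group.nilpotencyClass ↥(commutator G) ≤ c :=
      Subgroup.lowerCentralSeries_eq_bot_iff_nilpotencyClass_le.mp hbot
    have htor' : ∀ g : ↥(commutator G), IsOfFinOrder g := fun g =>
      isOfFinOrder_of_map (commutator G).subtype (Subgroup.subtype_injective _) (htor g)
    have hfin' : Finite ↥(commutator G) := ih ↥(commutator G) hclass htor'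
    exact Finite.of_equiv _ (Subgroup.groupEquivQuotientProdSubgroup (s := commutator G)).symm

private lemma finite_of_fg_nilpotent_torsion (G : Type u) [Group G] [Group.FG G]
    [Group.IsNilpotent G] (htor : ∀ g : G, IsOfFinOrder g) : Finite G :=
  finite_aux (Group.nilpotencyClass G) G le_rfl htor

end AuxFinite

section AuxGen

private lemma lcs_fg_mod_succ {G : Type*} [Group G] (hfg : Group.FG G) :
    ∀ n : ℕ, ∃ T : Set G, T.Finite ∧ T ⊆ (Subgroup.lowerCentralSeries (⊤ : Subgroup G) n : Set G) ∧
      Subgroup.lowerCentralSeries (⊤ : Subgroup G) n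
        = Subgroup.closure (T ∪ (Subgroup.lowerCentralSeries (⊤ : Subgroup G) (n + 1) : Set G)) := by
  obtain ⟨S, hStop, hSfin⟩ := Group.fg_iff.mp hfg
  intro n
  induction n with
  | zero =>
    refine ⟨S, hSfin, fun y _ => by simp, ?_⟩
    rw [Subgroup.lowerCentralSeries_zero]
    refine le_antisymm ?_ le_top
    rw [← hStop]
    exact Subgroup.closure_mono Set.subset_union_left
  | succ n ih =>
    obtain ⟨T, hTfin, hTsub, hTgen⟩ := ih
    set T' : Set G := (fun p : G × G => ⁅p.1, p.2⁆) '' (T ×ˢ S) with hT'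
    have hT'sub : T' ⊆ (Subgroup.lowerCentralSeries (⊤ : Subgroup G) (n + 1) : Set G) := by
      rintro - ⟨⟨t, s⟩, ⟨ht, _⟩, rfl⟩
      rw [lcs_succ' G n]
      exact Subgroup.commutator_mem_commutator (hTsub ht) (Subgroup.mem_top s)
    refine ⟨T', (hTfin.prod hSfin).image _, hT'sub, ?_⟩
    set K := Subgroup.closure (T' ∪ (Subgroup.lowerCentralSeries (⊤ : Subgroup G) (n + 2) : Set G)) with hK
    have hK_le : K ≤ Subgroup.lowerCentralSeries (⊤ : Subgroup G) (n + 1) := by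
      rw [hK, Subgroup.closure_le]
      refine Set.union_subset hT'sub ?_
      exact SetLike.coe_subset_coe.mpr (Subgroup.lowerCentralSeries_antitone _ (by omega))
    have hsuccK : ∀ y ∈ Subgroup.lowerCentralSeries (⊤ : Subgroup G) (n + 1), ∀ g : G, ⁅y, g⁆ ∈ K := by
      intro y hy g
      apply Subgroup.subset_closure
      right
      rw [lcs_succ' G (n + 1)]
      exact Subgroup.commutator_mem_commutator hy (Subgroup.mem_top g)
    haveI hKnormal : K.Normal := by
      constructor
      intro h hh g
      have h2 : ⁅g, h⁆ ∈ K := by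
        rw [← commutatorElement_inv]
        exact K.inv_mem (hsuccK h (hK_le hh) g)
      have h3 : g * h * g⁻¹ = ⁅g, h⁆ * h := by group
      rw [h3]
      exact K.mul_mem h2 hh
    set π := QuotientGroup.mk' K with hπ
    have hker : ∀ y : G, π y = 1 ↔ y ∈ K := fun y => QuotientGroup.eq_one_iff y
    have hcentral : ∀ y ∈ Subgroup.lowerCentralSeries (⊤ : Subgroup G) n, π y ∈ Subgroup.center (G ⧸ K) := by
      intro y hy
      rw [hTgen] at hy
      refine Subgroup.closure_induction
        (p := fun y _ => π y ∈ Subgroup.center (G ⧸ K)) ?_ ?_ ?_ ?_ hy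
      · rintro z (hz | hz)
        · -- z ∈ T
          rw [Subgroup.mem_center_iff]
          have key : ∀ g : G, Commute (π z) (π g) := by
            intro g
            have hg : g ∈ Subgroup.closure S := by rw [hStop]; exact Subgroup.mem_top g
            refine Subgroup.closure_induction
              (p := fun g _ => Commute (π z) (π g)) ?_ ?_ ?_ ?_ hg
            · intro s hs
              have h1 : ⁅z, s⁆ ∈ K :=
                Subgroup.subset_closure (Or.inl ⟨(z, s), ⟨hz, hs⟩, rfl⟩)
              have h2 : ⁅π z, π s⁆ = 1 := by
                rw [← map_commutatorElement]
                exact (hker _).mpr h1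
              exact commutatorElement_eq_one_iff_commute.mp h2
            · show Commute (π z) (π 1)
              rw [map_one]; exact Commute.one_right _
            · intro a b _ _ ha hb; rw [map_mul]; exact ha.mul_right hb
            · intro a _ ha; rw [map_inv]; exact ha.inv_right
          intro q
          obtain ⟨g, rfl⟩ := QuotientGroup.mk'_surjective K q
          exact (key g).symm
        · -- z ∈ lcs (n+1)
          rw [Subgroup.mem_center_iff]
          intro q
          obtain ⟨g, rfl⟩ := QuotientGroup.mk'_surjective K q
          have h2 : ⁅π z, π g⁆ = 1 := by
            rw [← map_commutatorElement]
            exact (hker _).mpr (hsuccK z hz g)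
          exact (commutatorElement_eq_one_iff_commute.mp h2).symm
      · show π 1 ∈ Subgroup.center (G ⧸ K)
        rw [map_one]; exact Subgroup.one_mem _
      · intro a b _ _ ha hb; rw [map_mul]; exact Subgroup.mul_mem _ ha hb
      · intro a _ ha; rw [map_inv]; exact Subgroup.inv_mem _ ha
    refine le_antisymm ?_ hK_le
    intro y hy
    have h1 : π y = 1 := by
      have hmem : π y ∈ Subgroup.map π (Subgroup.lowerCentralSeries (⊤ : Subgroup G) (n + 1)) := ⟨y, hy, rfl⟩
      rw [lcs_succ' G n, Subgroup.map_commutator] at hmem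
      have h2 : Subgroup.map π (Subgroup.lowerCentralSeries (⊤ : Subgroup G) n) ≤ Subgroup.center (G ⧸ K) := by
        rintro - ⟨u, hu, rfl⟩; exact hcentral u hu
      have h3 : ⁅Subgroup.map π (Subgroup.lowerCentralSeries (⊤ : Subgroup G) n), Subgroup.map π ⊤⁆
          ≤ ⁅Subgroup.center (G ⧸ K), (⊤ : Subgroup (G ⧸ K))⁆ :=
        Subgroup.commutator_mono h2 le_top
      have h4 : ⁅Subgroup.center (G ⧸ K), (⊤ : Subgroup (G ⧸ K))⁆ = ⊥ := by
        rw [Subgroup.commutator_eq_bot_iff_le_centralizer]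
        exact Subgroup.center_le_centralizer _
      have h5 := h3 hmem
      rw [h4, Subgroup.mem_bot] at h5
      exact h5
    exact (hker y).mp h1

end AuxGen

section AuxDisp

variable {Γ X : Type*} [Group Γ] [MetricSpace X] [MulAction Γ X]

private lemma D_mul (hiso : ∀ γ : Γ, Isometry (fun y : X => γ • y)) (x : X) (g h : Γ) :
    dist ((g * h) • x) x ≤ dist (g • x) x + dist (h • x) x := by
  have h1 : dist ((g * h) • x) (g • x) = dist (h • x) x := by
    rw [mul_smul]; exact (hiso g).dist_eq _ _
  calc dist ((g * h) • x) x ≤ dist ((g * h) • x) (g • x) + dist (g • x) x :=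
        dist_triangle _ _ _
    _ = dist (h • x) x + dist (g • x) x := by rw [h1]
    _ = _ := by ring

private lemma D_inv (hiso : ∀ γ : Γ, Isometry (fun y : X => γ • y)) (x : X) (g : Γ) :
    dist (g⁻¹ • x) x = dist (g • x) x := by
  have h1 := (hiso g).dist_eq (g⁻¹ • x) x
  simp only [smul_inv_smul] at h1
  rw [← h1, dist_comm]

private lemma D_pow (hiso : ∀ γ : Γ, Isometry (fun y : X => γ • y)) (x : X) (g : Γ) :
    ∀ n : ℕ, dist ((g ^ n) • x) x ≤ n * dist (g • x) x
  | 0 => by simp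
  | n + 1 => by
    calc dist ((g ^ (n + 1)) • x) x = dist ((g ^ n * g) • x) x := by rw [pow_succ]
      _ ≤ dist ((g ^ n) • x) x + dist (g • x) x := D_mul hiso x _ _
      _ ≤ n * dist (g • x) x + dist (g • x) x :=
          add_le_add_left (D_pow hiso x g n) _
      _ = (n + 1 : ℕ) * dist (g • x) x := by push_cast; ring

end AuxDisp

/-- Let `Γ` be a finitely generated nilpotent group acting by isometries on a metric space
`X`, `x ∈ X`, with `R₀ > 0` satisfying (H1) and (H2) as below.  Then for every `k ≥ 1`, if
`C_{k+1}(Γ)` is finite then so is `C_k(Γ)`. -/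
theorem lcs_finite_of_succ_finite {Γ X : Type*} [Group Γ] [MetricSpace X] [MulAction Γ X]
    (hfg : Group.FG Γ) (hnil : Group.IsNilpotent Γ)
    (hiso : ∀ γ : Γ, Isometry (fun y : X => γ • y)) (x : X) (R₀ : ℝ) (hR₀ : 0 < R₀)
    (H1 : ∀ γ : Γ, R₀ ≤ dist (γ • x) x → 1.9 * dist (γ • x) x ≤ dist ((γ ^ 2) • x) x)
    (H2 : ∀ γ : Γ, ¬ IsOfFinOrder γ → ∀ R : ℝ, 0 < R →
      ∃ N : ℕ, ∀ n ≥ N, R ≤ dist ((γ ^ n) • x) x) :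
    ∀ k : ℕ, 1 ≤ k → Finite ((⊤ : Subgroup Γ).lowerCentralSeries (k + 1)) →
      Finite ((⊤ : Subgroup Γ).lowerCentralSeries k) := by
  intro k hk hfin
  haveI := hnil
  haveI := hfin
  obtain ⟨B, hB0, hBF⟩ : ∃ B : ℝ, 0 ≤ B ∧
      ∀ f ∈ Subgroup.lowerCentralSeries (⊤ : Subgroup Γ) (k + 1), dist (f • x) x ≤ B := by
    obtain ⟨B, hB⟩ :=
      (Set.finite_range
        (fun f : Subgroup.lowerCentralSeries (⊤ : Subgroup Γ) (k + 1) => dist ((f : Γ) • x) x)).bddAbove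
    exact ⟨max B 0, le_max_right _ _,
      fun f hf => le_trans (hB ⟨⟨f, hf⟩, rfl⟩) (le_max_left _ _)⟩
  set π := QuotientGroup.mk' (Subgroup.lowerCentralSeries (⊤ : Subgroup Γ) (k + 1)) with hπ
  have hker : ∀ y : Γ, π y = 1 ↔ y ∈ Subgroup.lowerCentralSeries (⊤ : Subgroup Γ) (k + 1) := fun y =>
    QuotientGroup.eq_one_iff y
  have hcomm : ∀ γ ∈ Subgroup.lowerCentralSeries (⊤ : Subgroup Γ) k, ∀ g : Γ, Commute (π γ) (π g) := by
    intro γ hγ g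
    have h1 : ⁅γ, g⁆ ∈ Subgroup.lowerCentralSeries (⊤ : Subgroup Γ) (k + 1) := by
      rw [lcs_succ' Γ k]; exact Subgroup.commutator_mem_commutator hγ (Subgroup.mem_top g)
    have h2 : ⁅π γ, π g⁆ = 1 := by rw [← map_commutatorElement]; exact (hker _).mpr h1
    exact commutatorElement_eq_one_iff_commute.mp h2
  have hcommQ : ∀ γ ∈ Subgroup.lowerCentralSeries (⊤ : Subgroup Γ) k,
      ∀ q : Γ ⧸ Subgroup.lowerCentralSeries (⊤ : Subgroup Γ) (k + 1), Commute (π γ) q := by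
    intro γ hγ q
    obtain ⟨g, rfl⟩ := QuotientGroup.mk'_surjective _ q
    exact hcomm γ hγ g
  have claim : ∀ γ ∈ Subgroup.lowerCentralSeries (⊤ : Subgroup Γ) k, ∃ C : ℝ, 0 ≤ C ∧
      ∀ n : ℕ, ∃ w : Γ, π w = π (γ ^ (n * n)) ∧ dist (w • x) x ≤ C * n := by
    obtain ⟨k', hk'⟩ : ∃ k', k = k' + 1 := ⟨k - 1, (Nat.succ_pred_eq_of_pos hk).symm⟩
    intro γ hγ
    rw [hk', Subgroup.lowerCentralSeries_succ] at hγ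
    have hmem : ∀ {z : Γ}, z ∈ Subgroup.closure
        {z | ∃ p ∈ Subgroup.lowerCentralSeries (⊤ : Subgroup Γ) k', ∃ q ∈ (⊤ : Subgroup Γ), p * q * p⁻¹ * q⁻¹ = z} →
        z ∈ Subgroup.lowerCentralSeries (⊤ : Subgroup Γ) k := by
      intro z hz; rw [hk', Subgroup.lowerCentralSeries_succ]; exact hz
    refine Subgroup.closure_induction (p := fun γ _ => ∃ C : ℝ, 0 ≤ C ∧
      ∀ n : ℕ, ∃ w : Γ, π w = π (γ ^ (n * n)) ∧ dist (w • x) x ≤ C * n) ?_ ?_ ?_ ?_ hγ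
    · rintro z ⟨p, hp, q, -, rfl⟩
      have hzk : ⁅p, q⁆ ∈ Subgroup.lowerCentralSeries (⊤ : Subgroup Γ) k := by
        rw [hk', lcs_succ' Γ k']
        exact Subgroup.commutator_mem_commutator hp (Subgroup.mem_top q)
      have hzc : ∀ h : Γ ⧸ Subgroup.lowerCentralSeries (⊤ : Subgroup Γ) (k + 1), Commute ⁅π p, π q⁆ h := by
        intro h
        rw [← map_commutatorElement]
        exact hcommQ _ hzk h
      have hd0p : (0:ℝ) ≤ dist (p • x) x := dist_nonneg
      have hd0q : (0:ℝ) ≤ dist (q • x) x := dist_nonneg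
      refine ⟨2 * (dist (p • x) x + dist (q • x) x), by linarith, fun n => ?_⟩
      refine ⟨⁅p ^ n, q ^ n⁆, ?_, ?_⟩
      · rw [map_commutatorElement, map_pow, map_pow, commutator_pow_pow hzc n,
          ← map_commutatorElement, ← map_pow]
      · have hD1 : dist (⁅p ^ n, q ^ n⁆ • x) x ≤
            dist ((p ^ n) • x) x + dist ((q ^ n) • x) x
            + dist (((p ^ n)⁻¹) • x) x + dist (((q ^ n)⁻¹) • x) x := by
          rw [commutatorElement_def]
          have e1 := D_mul hiso x (p ^ n * q ^ n * (p ^ n)⁻¹) (q ^ n)⁻¹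
          have e2 := D_mul hiso x (p ^ n * q ^ n) (p ^ n)⁻¹
          have e3 := D_mul hiso x (p ^ n) (q ^ n)
          linarith
        rw [D_inv hiso x, D_inv hiso x] at hD1
        have h2 := D_pow hiso x p n
        have h3 := D_pow hiso x q n
        have := hD1
        nlinarith [this, h2, h3]
    · exact ⟨0, le_rfl, fun n => ⟨1, by rw [one_pow], by simp⟩⟩
    · intro a b ha hb iha ihb
      obtain ⟨C₁, hC₁0, hw₁⟩ := iha
      obtain ⟨C₂, hC₂0, hw₂⟩ := ihb
      refine ⟨C₁ + C₂, by linarith, fun n => ?_⟩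
      obtain ⟨w₁, hw₁e, hw₁d⟩ := hw₁ n
      obtain ⟨w₂, hw₂e, hw₂d⟩ := hw₂ n
      have hab : Commute (π a) (π b) := hcomm a (hmem ha) b
      refine ⟨w₁ * w₂, ?_, ?_⟩
      · have h5 : π ((a * b) ^ (n * n)) = π (a ^ (n * n)) * π (b ^ (n * n)) := by
          rw [map_pow, map_mul, hab.mul_pow, map_pow, map_pow]
        rw [map_mul, hw₁e, hw₂e, h5]
      · calc dist ((w₁ * w₂) • x) x ≤ dist (w₁ • x) x + dist (w₂ • x) x := D_mul hiso x _ _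
          _ ≤ C₁ * n + C₂ * n := add_le_add hw₁d hw₂d
          _ = (C₁ + C₂) * n := by ring
    · intro a ha iha
      obtain ⟨C, hC0, hw⟩ := iha
      refine ⟨C, hC0, fun n => ?_⟩
      obtain ⟨w, hwe, hwd⟩ := hw n
      refine ⟨w⁻¹, ?_, ?_⟩
      · rw [map_inv, hwe, ← map_inv, ← inv_pow]
      · rw [D_inv hiso x]; exact hwd
  -- every element of lcs Γ k has finite order
  have htor : ∀ γ ∈ Subgroup.lowerCentralSeries (⊤ : Subgroup Γ) k, IsOfFinOrder γ := by
    intro γ hγ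
    by_contra hinf
    obtain ⟨C, hC0, hCw⟩ := claim γ hγ
    obtain ⟨N, hN⟩ := H2 γ hinf R₀ hR₀
    have hN1 : 1 ≤ N := by
      by_contra hcon
      push_neg at hcon
      interval_cases N
      have := hN 0 le_rfl
      simp only [pow_zero, one_smul, dist_self] at this
      linarith
    have hdouble : ∀ m : ℕ, N ≤ m → ∀ j : ℕ,
        (1.9 : ℝ) ^ j * R₀ ≤ dist ((γ ^ (m * 2 ^ j)) • x) x := by
      intro m hm j
      induction j with
      | zero => simpa using hN m hm
      | succ j ih =>
        have h1 : N ≤ m * 2 ^ j :=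
          le_trans hm (Nat.le_mul_of_pos_right _ (Nat.pow_pos (by norm_num)))
        have h2 : R₀ ≤ dist ((γ ^ (m * 2 ^ j)) • x) x := hN _ h1
        have h3 := H1 (γ ^ (m * 2 ^ j)) h2
        have h4 : (γ ^ (m * 2 ^ j)) ^ 2 = γ ^ (m * 2 ^ (j + 1)) := by
          rw [← pow_mul]
          congr 1
          ring
        calc (1.9 : ℝ) ^ (j + 1) * R₀ = 1.9 * ((1.9 : ℝ) ^ j * R₀) := by ring
          _ ≤ 1.9 * dist ((γ ^ (m * 2 ^ j)) • x) x := by nlinarith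
          _ ≤ dist (((γ ^ (m * 2 ^ j)) ^ 2) • x) x := h3
          _ = dist ((γ ^ (m * 2 ^ (j + 1))) • x) x := by rw [h4]
    have hcontr : ∀ j : ℕ, (3.61 : ℝ) ^ j * R₀ ≤ (C * N + B) * 2 ^ j := by
      intro j
      obtain ⟨w, hwe, hwd⟩ := hCw (N * 2 ^ j)
      have hexp : (N * 2 ^ j) * (N * 2 ^ j) = (N * N) * 2 ^ (2 * j) := by ring
      have hlow : (1.9 : ℝ) ^ (2 * j) * R₀ ≤
          dist ((γ ^ ((N * 2 ^ j) * (N * 2 ^ j))) • x) x := by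
        rw [hexp]
        exact hdouble (N * N) (Nat.le_mul_of_pos_left _ hN1) (2 * j)
      have hfmem : w⁻¹ * γ ^ ((N * 2 ^ j) * (N * 2 ^ j)) ∈ Subgroup.lowerCentralSeries (⊤ : Subgroup Γ) (k + 1) := by
        rw [← hker, map_mul, map_inv, hwe]
        exact inv_mul_cancel _
      have hcast : ((N * 2 ^ j : ℕ) : ℝ) = (N : ℝ) * 2 ^ j := by push_cast; ring
      rw [hcast] at hwd
      have hup : dist ((γ ^ ((N * 2 ^ j) * (N * 2 ^ j))) • x) x
          ≤ C * ((N : ℝ) * 2 ^ j) + B := by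
        have h5 : γ ^ ((N * 2 ^ j) * (N * 2 ^ j))
            = w * (w⁻¹ * γ ^ ((N * 2 ^ j) * (N * 2 ^ j))) := by group
        calc dist ((γ ^ ((N * 2 ^ j) * (N * 2 ^ j))) • x) x
            = dist ((w * (w⁻¹ * γ ^ ((N * 2 ^ j) * (N * 2 ^ j)))) • x) x := by rw [← h5]
          _ ≤ dist (w • x) x
              + dist ((w⁻¹ * γ ^ ((N * 2 ^ j) * (N * 2 ^ j))) • x) x := D_mul hiso x _ _
          _ ≤ C * ((N : ℝ) * 2 ^ j) + B := add_le_add hwd (hBF _ hfmem)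
      have h19 : (1.9 : ℝ) ^ (2 * j) = 3.61 ^ j := by
        rw [pow_mul]; norm_num
      have h2j : (1 : ℝ) ≤ 2 ^ j := one_le_pow₀ (by norm_num : (1:ℝ) ≤ 2)
      rw [h19] at hlow
      linarith [hup, hlow, mul_le_mul_of_nonneg_left h2j hB0]
    obtain ⟨j, hj⟩ := pow_unbounded_of_one_lt ((C * N + B) / R₀)
      (show (1 : ℝ) < 1.805 by norm_num)
    have h1 := hcontr j
    have h2 : C * N + B < 1.805 ^ j * R₀ := by
      rw [div_lt_iff₀ hR₀] at hj; linarith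
    have h3 : (3.61 : ℝ) ^ j = 1.805 ^ j * 2 ^ j := by
      rw [← mul_pow]; norm_num
    have h2j : (0 : ℝ) < 2 ^ j := by positivity
    nlinarith [mul_lt_mul_of_pos_right h2 h2j, h1]
  -- conclude using finite generation
  obtain ⟨T, hTfin, -, hTgen⟩ := lcs_fg_mod_succ hfg k
  have hFfin : ((Subgroup.lowerCentralSeries (⊤ : Subgroup Γ) (k + 1) : Subgroup Γ) : Set Γ).Finite :=
    Set.toFinite _
  haveI hfgk : Group.FG ↥(Subgroup.lowerCentralSeries (⊤ : Subgroup Γ) k) := by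
    rw [Group.fg_iff_subgroup_fg, Subgroup.fg_iff]
    exact ⟨T ∪ (Subgroup.lowerCentralSeries (⊤ : Subgroup Γ) (k + 1) : Set Γ), hTgen.symm, hTfin.union hFfin⟩
  exact finite_of_fg_nilpotent_torsion _ (fun g =>
    isOfFinOrder_of_map (Subgroup.lowerCentralSeries (⊤ : Subgroup Γ) k).subtype
      (Subgroup.subtype_injective _) (htor g g.2))
end

section
/- Let G be a compact Lie group that is nilpotent as an abstract group. Then the identity component G₀ of G is central in G: every element of the connected component of the identity commutes with every element of G. -/
open Set Manifold Pointwise commutatorElement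

/-! Auxiliary lemmas for: the identity component of a compact nilpotent Lie group is central. -/

section Aux

/-- A charted space over a normed space is T1. -/
lemma auxT1 (E : Type*) [NormedAddCommGroup E] [NormedSpace ℝ E]
    {G : Type*} [TopologicalSpace G] [ChartedSpace E G] : T1Space G := by
  rw [t1Space_iff_exists_open]
  intro x y hxy
  set c := chartAt E x with hc
  by_cases hy : y ∈ c.source
  · refine ⟨c.source ∩ c ⁻¹' ({c y}ᶜ), ?_, ⟨mem_chart_source E x, ?_⟩, ?_⟩
    · exact c.continuousOn.isOpen_inter_preimage c.open_source isOpen_compl_singleton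
    · simp only [mem_preimage, mem_compl_iff, mem_singleton_iff]
      exact fun h => hxy (c.injOn (mem_chart_source E x) hy h)
    · rintro ⟨-, h2⟩; simp at h2
  · exact ⟨c.source, c.open_source, mem_chart_source E x, hy⟩

/-- The topological closure of the subgroup generated by a preconnected set containing 1
is preconnected. -/
lemma auxPreconnClosure {H : Type*} [Group H] [TopologicalSpace H] [IsTopologicalGroup H]
    {s : Set H} (h1 : (1 : H) ∈ s) (hs : IsPreconnected s) :
    IsPreconnected ((Subgroup.closure s).topologicalClosure : Set H) := by
  suffices h : IsPreconnected ((Subgroup.closure s : Subgroup H) : Set H) by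
    rw [Subgroup.topologicalClosure_coe]; exact h.closure
  set t : Set H := s ∪ s⁻¹ with hts
  have h1t : (1 : H) ∈ t := Or.inl h1
  have htc : IsPreconnected t := by
    apply IsPreconnected.union (1 : H) h1 (by simpa using h1) hs
    have : s⁻¹ = (fun x : H => x⁻¹) '' s := by ext a; simp [Set.mem_inv]
    rw [this]
    exact hs.image _ (continuous_inv.continuousOn)
  have htsymm : t⁻¹ = t := by
    rw [hts, Set.union_inv, inv_inv]; exact Set.union_comm _ _
  have hpow : ∀ n : ℕ, IsPreconnected (t ^ n) ∧ (1 : H) ∈ t ^ n := by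
    intro n
    induction n with
    | zero =>
      constructor
      · rw [pow_zero, show (1 : Set H) = {1} by ext a; simp [Set.mem_one]]
        exact isPreconnected_singleton
      · rw [pow_zero]; exact Set.mem_one.mpr rfl
    | succ n ih =>
      constructor
      · rw [pow_succ, ← Set.image_mul_prod]
        exact (ih.1.prod htc).image _ (continuous_mul.continuousOn)
      · rw [pow_succ]
        simpa using Set.mul_mem_mul ih.2 h1t
  have hinvpow : ∀ n : ℕ, (t ^ n)⁻¹ = t ^ n := by
    intro n
    induction n with
    | zero => rw [pow_zero]; ext a; simp [Set.mem_inv, Set.mem_one]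
    | succ n ih =>
      calc (t ^ (n + 1))⁻¹ = (t ^ n * t)⁻¹ := by rw [pow_succ]
        _ = t⁻¹ * (t ^ n)⁻¹ := mul_inv_rev _ _
        _ = t * t ^ n := by rw [htsymm, ih]
        _ = t ^ (n + 1) := (pow_succ' t n).symm
  have hU : ((Subgroup.closure s : Subgroup H) : Set H) = ⋃ n, t ^ n := by
    apply Set.Subset.antisymm
    · have hK : ∃ K : Subgroup H, (K : Set H) = ⋃ n, t ^ n := by
        refine ⟨{ carrier := ⋃ n, t ^ n
                  one_mem' := Set.mem_iUnion.mpr ⟨0, by rw [pow_zero]; exact Set.mem_one.mpr rfl⟩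
                  mul_mem' := ?_
                  inv_mem' := ?_ }, rfl⟩
        · rintro a b ha hb
          obtain ⟨m, hm⟩ := Set.mem_iUnion.mp ha
          obtain ⟨n, hn⟩ := Set.mem_iUnion.mp hb
          exact Set.mem_iUnion.mpr ⟨m + n, by rw [pow_add]; exact Set.mul_mem_mul hm hn⟩
        · rintro a ha
          obtain ⟨n, hn⟩ := Set.mem_iUnion.mp ha
          refine Set.mem_iUnion.mpr ⟨n, ?_⟩
          rw [← hinvpow n]; simpa [Set.mem_inv] using hn
      obtain ⟨K, hKeq⟩ := hK
      have hle : Subgroup.closure s ≤ K := by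
        apply (Subgroup.closure_le K).mpr
        intro a ha
        have h1' : a ∈ t ^ 1 := by rw [pow_one]; exact Or.inl ha
        show a ∈ (K : Set H)
        rw [hKeq]
        exact Set.mem_iUnion.mpr ⟨1, h1'⟩
      intro a ha; rw [← hKeq]; exact hle ha
    · refine Set.iUnion_subset fun n => ?_
      induction n with
      | zero =>
        intro a ha
        rw [pow_zero] at ha
        rw [Set.mem_one.mp ha]; exact (Subgroup.closure s).one_mem
      | succ n ih =>
        rw [pow_succ]
        rintro a ⟨b, hb, c, hc, rfl⟩
        refine (Subgroup.closure s).mul_mem (ih hb) ?_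
        rcases hc with hc | hc
        · exact Subgroup.subset_closure hc
        · exact (Subgroup.closure s).inv_mem_iff.mp (Subgroup.subset_closure (Set.mem_inv.mp hc))
  rw [hU, ← Set.sUnion_range]
  apply isPreconnected_sUnion (1 : H)
  · rintro u ⟨n, rfl⟩; exact (hpow n).2
  · rintro u ⟨n, rfl⟩; exact (hpow n).1

end Aux

section Step

variable {G : Type*} [Group G]

lemma auxCommMulLeft (x y h : G) : ⁅x * y, h⁆ = x * ⁅y, h⁆ * x⁻¹ * ⁅x, h⁆ := by
  simp only [commutatorElement_def]; group

lemma auxCommMulRight (x h k : G) : ⁅x, h * k⁆ = ⁅x, h⁆ * (h * ⁅x, k⁆ * h⁻¹) := by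
  simp only [commutatorElement_def]; group

variable [TopologicalSpace G] [IsTopologicalGroup G] [T1Space G] [CompactSpace G]
  [LocallyConnectedSpace G]

/-- The key descending step: if all commutators `⁅x,h⁆` with `x ∈ A` are central, `A` is a
compact connected subgroup, and the group has no small subgroups and locally no `m`-torsion,
then `A` is central. -/
lemma auxStep (U : Set G) (hUo : IsOpen U) (hU1 : (1 : G) ∈ U)
    (hNSS : ∀ z : G, (∀ n : ℕ, z ^ n ∈ U) → z = 1)
    (hTor : ∀ m : ℕ, 0 < m → ∃ V : Set G, IsOpen V ∧ (1 : G) ∈ V ∧ ∀ z ∈ V, z ^ m = 1 → z = 1)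
    {A : Subgroup G} (hAc : IsPreconnected (A : Set G)) (hAcmp : IsCompact (A : Set G))
    (hcen : ∀ x ∈ A, ∀ h g : G, Commute ⁅x, h⁆ g) :
    ∀ x ∈ A, ∀ h : G, ⁅x, h⁆ = 1 := by
  -- bilinearity of the commutator pairing
  have hbi1 : ∀ x ∈ A, ∀ y ∈ A, ∀ h : G, ⁅x * y, h⁆ = ⁅y, h⁆ * ⁅x, h⁆ := by
    intro x hx y hy h
    have e : x * ⁅y, h⁆ * x⁻¹ = ⁅y, h⁆ := by
      rw [← hcen y hy h x]; group
    rw [auxCommMulLeft, e]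
  have hbi2 : ∀ x ∈ A, ∀ h k : G, ⁅x, h * k⁆ = ⁅x, h⁆ * ⁅x, k⁆ := by
    intro x hx h k
    have e : h * ⁅x, k⁆ * h⁻¹ = ⁅x, k⁆ := by
      rw [← hcen x hx k h]; group
    rw [auxCommMulRight, e]
  have hpow1 : ∀ x ∈ A, ∀ h : G, ∀ n : ℕ, ⁅x, h⁆ ^ n = ⁅x ^ n, h⁆ := by
    intro x hx h n
    induction n with
    | zero => simp only [pow_zero, commutatorElement_def]; group
    | succ n ih =>
      rw [pow_succ, ih, pow_succ, hbi1 (x ^ n) (pow_mem hx n) x hx]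
      exact (hcen x hx h _).symm
  have hpow2 : ∀ x ∈ A, ∀ h : G, ∀ n : ℕ, ⁅x, h⁆ ^ n = ⁅x, h ^ n⁆ := by
    intro x hx h n
    induction n with
    | zero => simp only [pow_zero, commutatorElement_def]; group
    | succ n ih =>
      rw [pow_succ, ih, pow_succ, hbi2 x hx (h ^ n) h]
  -- identity component subgroup and its finite index
  set G0 : Subgroup G := Subgroup.connectedComponentOfOne G with hG0
  have hG0open : IsOpen (G0 : Set G) := isOpen_connectedComponent
  haveI : G0.Normal := by
    constructor
    intro n hn g
    have hconj : Continuous fun x : G => g * x * g⁻¹ :=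
      (continuous_const.mul continuous_id).mul continuous_const
    have := hconj.image_connectedComponent_subset 1
    simp only [mul_one, mul_inv_cancel] at this
    exact this ⟨n, hn, rfl⟩
  haveI : Finite (G ⧸ G0) := Subgroup.quotient_finite_of_isOpen G0 hG0open
  haveI : G0.FiniteIndex := Subgroup.finiteIndex_of_finite_quotient (H := G0)
  set m₀ : ℕ := G0.index with hm₀
  have hm₀pos : 0 < m₀ := Nat.pos_of_ne_zero Subgroup.FiniteIndex.index_ne_zero
  -- tube lemma
  have hFcont : Continuous fun p : G × G => ⁅p.1, p.2⁆ := by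
    simp only [commutatorElement_def]
    exact ((continuous_fst.mul continuous_snd).mul continuous_fst.inv).mul continuous_snd.inv
  have hsub : (A : Set G) ×ˢ ({1} : Set G) ⊆ (fun p : G × G => ⁅p.1, p.2⁆) ⁻¹' U := by
    rintro ⟨x, y⟩ ⟨hx, hy⟩
    simp only [Set.mem_singleton_iff] at hy
    subst hy
    simp only [Set.mem_preimage]
    have : ⁅x, (1 : G)⁆ = 1 := by simp only [commutatorElement_def]; group
    rw [this]; exact hU1
  obtain ⟨u, v, huo, hvo, hAu, h1v, huv⟩ :=
    generalized_tube_lemma hAcmp isCompact_singleton (hUo.preimage hFcont) hsub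
  have hW : ∀ w ∈ v, ∀ x ∈ A, ⁅x, w⁆ = 1 := by
    intro w hw x hx
    apply hNSS
    intro n
    rw [hpow1 x hx w n]
    exact huv (Set.mk_mem_prod (hAu (pow_mem hx n)) hw)
  -- commutators with the identity component vanish
  have hG0com : ∀ x ∈ A, ∀ g ∈ G0, ⁅x, g⁆ = 1 := by
    intro x hx
    set Kx : Subgroup G := {
      carrier := {h : G | ⁅x, h⁆ = 1}
      one_mem' := by simp only [Set.mem_setOf_eq, commutatorElement_def]; group
      mul_mem' := by
        intro a b ha hb
        simp only [Set.mem_setOf_eq] at ha hb ⊢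
        rw [hbi2 x hx a b, ha, hb, one_mul]
      inv_mem' := by
        intro a ha
        simp only [Set.mem_setOf_eq] at ha ⊢
        have h0 : ⁅x, a * a⁻¹⁆ = 1 := by
          simp only [mul_inv_cancel, commutatorElement_def]; group
        rw [hbi2 x hx a a⁻¹, ha, one_mul] at h0
        exact h0 } with hKx
    have hKxopen : IsOpen (Kx : Set G) := by
      apply Subgroup.isOpen_of_mem_nhds
      exact Filter.mem_of_superset (hvo.mem_nhds (by simpa using h1v)) (fun w hw => hW w hw x hx)
    have hKxG0 : (G0 : Set G) ⊆ (Kx : Set G) :=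
      IsClopen.connectedComponent_subset ⟨Subgroup.isClosed_of_isOpen Kx hKxopen, hKxopen⟩
        Kx.one_mem
    intro g hg
    exact hKxG0 hg
  have hm : ∀ y ∈ A, ∀ h : G, ⁅y, h⁆ ^ m₀ = 1 := by
    intro y hy h
    rw [hpow2 y hy h m₀]
    exact hG0com y hy (h ^ m₀) (Subgroup.pow_index_mem G0 h)
  -- final connectedness argument
  intro x hx h
  by_contra hne
  obtain ⟨V, hVo, hV1, hVt⟩ := hTor m₀ hm₀pos
  set S' : Set G := (fun y : G => ⁅y, h⁆) '' (A : Set G) with hS'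
  have hS'conn : IsPreconnected S' := by
    apply hAc.image
    apply Continuous.continuousOn
    simp only [commutatorElement_def]
    exact ((continuous_id.mul continuous_const).mul continuous_inv).mul continuous_const
  have hcover : S' ⊆ V ∪ {(1 : G)}ᶜ := by
    intro p hp
    by_cases hp1 : p = 1
    · left; rw [hp1]; exact hV1
    · right; simpa using hp1
  have hn1 : (S' ∩ V).Nonempty := by
    refine ⟨1, ⟨1, A.one_mem, ?_⟩, hV1⟩
    simp only [commutatorElement_def]; group
  have hn2 : (S' ∩ {(1 : G)}ᶜ).Nonempty := ⟨⁅x, h⁆, ⟨x, hx, rfl⟩, by simpa using hne⟩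
  obtain ⟨p, hpS, hpV, hpne⟩ := hS'conn V {(1 : G)}ᶜ hVo isOpen_compl_singleton hcover hn1 hn2
  obtain ⟨y, hy, rfl⟩ := hpS
  have := hVt _ hpV (hm y hy h)
  rw [this] at hpne
  simp at hpne

end Step

section Core

set_option maxHeartbeats 2000000 in
lemma auxCore (E : Type*) [NormedAddCommGroup E] [NormedSpace ℝ E]
    {G : Type*} [TopologicalSpace G] [ChartedSpace E G] [Group G]
    [LieGroup (modelWithCornersSelf ℝ E) (⊤ : ℕ∞) G] :
    ∃ U : Set G, IsOpen U ∧ (1 : G) ∈ U ∧ (∀ z : G, (∀ n : ℕ, z ^ n ∈ U) → z = 1) ∧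
      ∀ m : ℕ, 0 < m → ∃ V : Set G, IsOpen V ∧ (1 : G) ∈ V ∧ ∀ z ∈ V, z ^ m = 1 → z = 1 := by
  classical
  haveI : IsTopologicalGroup G := topologicalGroup_of_lieGroup 𝓘(ℝ, E) (⊤ : ℕ∞) (G := G)
  set c : OpenPartialHomeomorph G E := chartAt E (1 : G) with hc
  set o : E := c 1 with ho
  set ψ : G → E := fun g => c g - o with hψ
  have hψ1 : ψ 1 = 0 := by simp [hψ, ho]
  have hoT : o ∈ c.target := c.map_source (mem_chart_source E 1)
  set Fm : E × E → E := fun p => c (c.symm p.1 * c.symm p.2) with hFm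
  have hF : ContDiffAt ℝ 2 Fm (o, o) := by
    have h0 : ContMDiffAt (𝓘(ℝ, E).prod 𝓘(ℝ, E)) 𝓘(ℝ, E) ((⊤ : ℕ∞) : WithTop ℕ∞) (fun p : G × G => p.1 * p.2) (1, 1) :=
      (contMDiff_mul 𝓘(ℝ, E) (⊤ : ℕ∞) (G := G)).contMDiffAt
    rw [contMDiffAt_iff] at h0
    obtain ⟨-, h⟩ := h0
    rw [ModelWithCorners.range_eq_univ, contDiffWithinAt_univ] at h
    have e2 : ∀ p : E × E, (extChartAt (𝓘(ℝ, E).prod 𝓘(ℝ, E)) ((1 : G), (1 : G))).symm p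
        = (c.symm p.1, c.symm p.2) := by
      intro p
      simp [extChartAt, OpenPartialHomeomorph.extend, hc, OpenPartialHomeomorph.prod, PartialEquiv.prod]
    have e3 : (extChartAt (𝓘(ℝ, E).prod 𝓘(ℝ, E)) ((1 : G), (1 : G))) (1, 1) = (o, o) := by
      simp [extChartAt, OpenPartialHomeomorph.extend, hc, ho, OpenPartialHomeomorph.prod,
        PartialEquiv.prod]
    rw [e3] at h
    have h2 := h.of_le
      (by { rw [show ((2 : WithTop ℕ∞)) = ((2 : ℕ∞) : WithTop ℕ∞) from rfl]
            exact WithTop.coe_le_coe.mpr le_top } :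
        (2 : WithTop ℕ∞) ≤ ((⊤ : ℕ∞) : WithTop ℕ∞))
    apply h2.congr_of_eventuallyEq
    filter_upwards [] with p
    simp only [Function.comp_apply, e2]
    simp [extChartAt, OpenPartialHomeomorph.extend, hc, hFm]
  set mh : E × E → E := fun p => Fm (p.1 + o, p.2 + o) - o with hmh
  have hmh2 : ContDiffAt ℝ 2 mh (0, 0) := by
    have hτ : ContDiffAt ℝ 2 (fun p : E × E => (p.1 + o, p.2 + o)) (0, 0) :=
      ((contDiff_fst.add contDiff_const).prodMk (contDiff_snd.add contDiff_const)).contDiffAt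
    have hF' : ContDiffAt ℝ 2 Fm ((fun p : E × E => (p.1 + o, p.2 + o)) (0, 0)) := by
      simpa using hF
    exact (hF'.comp (0, 0) hτ).sub contDiffAt_const
  obtain ⟨ρ₀, hρ₀pos, hball⟩ := Metric.isOpen_iff.mp c.open_target o hoT
  have hmem_ball : ∀ a : E, ‖a‖ < ρ₀ → a + o ∈ c.target := by
    intro a ha
    apply hball
    rw [Metric.mem_ball, dist_eq_norm]
    simpa using ha
  have hid1 : ∀ a : E, ‖a‖ < ρ₀ → mh (a, 0) = a := by
    intro a ha
    have haT := hmem_ball a ha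
    simp only [hmh, hFm]
    rw [zero_add, ho, c.left_inv (mem_chart_source E 1), mul_one, c.right_inv haT]
    abel
  have hid2 : ∀ b : E, ‖b‖ < ρ₀ → mh (0, b) = b := by
    intro b hb
    have hbT := hmem_ball b hb
    simp only [hmh, hFm]
    rw [zero_add, ho, c.left_inv (mem_chart_source E 1), one_mul, c.right_inv hbT]
    abel
  obtain ⟨u, hu_nhds, hCDO⟩ := hmh2.contDiffOn le_rfl (by simp)
  obtain ⟨u', hu'sub, hu'open, hu'mem⟩ := mem_nhds_iff.mp hu_nhds
  have hCDO' : ContDiffOn ℝ 2 mh u' := hCDO.mono hu'sub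
  have hf'CD : ContDiffAt ℝ 1 (fderiv ℝ mh) (0, 0) :=
    (hCDO'.fderiv_of_isOpen (m := 1) hu'open (by norm_num)).contDiffAt
      (hu'open.mem_nhds hu'mem)
  obtain ⟨K, t, ht_nhds, hLip⟩ := hf'CD.exists_lipschitzOnWith
  obtain ⟨σ, hσpos, hσsub⟩ := Metric.mem_nhds_iff.mp (Filter.inter_mem ht_nhds
    (hu'open.mem_nhds hu'mem))
  set ρ : ℝ := min (σ / 2) (ρ₀ / 2) with hρ
  have hρpos : 0 < ρ := lt_min (by linarith) (by linarith)
  have hρσ : ρ < σ := lt_of_le_of_lt (min_le_left _ _) (by linarith)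
  have hρρ₀ : ρ < ρ₀ := lt_of_le_of_lt (min_le_right _ _) (by linarith)
  have hmem_t : ∀ p : E × E, ‖p.1‖ < ρ → ‖p.2‖ < ρ → p ∈ t ∩ u' := by
    intro p h1 h2
    apply hσsub
    rw [Metric.mem_ball, dist_eq_norm, show ((0, 0) : E × E) = 0 from rfl, sub_zero,
      Prod.norm_def]
    exact max_lt (lt_trans h1 hρσ) (lt_trans h2 hρσ)
  have hKnn : (0 : ℝ) ≤ (K : ℝ) := K.2
  -- the quantitative multiplication estimate
  have est : ∀ a b : E, ‖a‖ < ρ → ‖b‖ < ρ → ‖mh (a, b) - a - b‖ ≤ (K : ℝ) * ‖b‖ * ‖a‖ := by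
    intro a b hanorm hbnorm
    set D : E × E → (E × E) →L[ℝ] E := fun p => fderiv ℝ mh p with hD
    set inl : E →L[ℝ] E × E := ContinuousLinearMap.inl ℝ E E with hinl
    have hder : ∀ x : E, ‖x‖ < ρ → HasFDerivAt (fun y : E => mh (y, b))
        ((D (x, b)).comp inl) x := by
      intro x hx
      have hdm : HasFDerivAt mh (D (x, b)) (x, b) :=
        ((hCDO'.contDiffAt (hu'open.mem_nhds (hmem_t (x, b) hx hbnorm).2)).differentiableAt
          (by norm_num)).hasFDerivAt
      exact hdm.comp x (hasFDerivAt_prodMk_left (𝕜 := ℝ) x b)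
    have hzero : ∀ x : E, ‖x‖ < ρ → (D (x, 0)).comp inl = ContinuousLinearMap.id ℝ E := by
      intro x hx
      have hdm : HasFDerivAt (fun y : E => mh (y, 0)) ((D (x, 0)).comp inl) x := by
        have hdm0 : HasFDerivAt mh (D (x, 0)) (x, 0) :=
          ((hCDO'.contDiffAt (hu'open.mem_nhds
            (hmem_t (x, 0) hx (by simpa using hρpos)).2)).differentiableAt
            (by norm_num)).hasFDerivAt
        exact hdm0.comp x (hasFDerivAt_prodMk_left (𝕜 := ℝ) x (0 : E))
      have hloc : (fun y : E => mh (y, 0)) =ᶠ[nhds x] id := by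
        filter_upwards [Metric.ball_mem_nhds x (show (0 : ℝ) < ρ₀ - ‖x‖ by
          have := lt_trans hx hρρ₀; linarith)] with y hy
        have hyn : ‖y‖ < ρ₀ := by
          rw [Metric.mem_ball, dist_eq_norm] at hy
          calc ‖y‖ = ‖y - x + x‖ := by rw [sub_add_cancel]
            _ ≤ ‖y - x‖ + ‖x‖ := norm_add_le _ _
            _ < (ρ₀ - ‖x‖) + ‖x‖ := by linarith
            _ = ρ₀ := by ring
        exact hid1 y hyn
      have hdid : HasFDerivAt (fun y : E => mh (y, 0)) (ContinuousLinearMap.id ℝ E) x := by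
        rw [hloc.hasFDerivAt_iff]
        exact hasFDerivAt_id x
      exact hdm.unique hdid
    have hbound : ∀ x : E, ‖x‖ < ρ →
        ‖(D (x, b)).comp inl - ContinuousLinearMap.id ℝ E‖ ≤ (K : ℝ) * ‖b‖ := by
      intro x hx
      rw [← hzero x hx]
      have hcomp : (D (x, b)).comp inl - (D (x, 0)).comp inl
          = ((D (x, b)) - (D (x, 0))).comp inl := by
        ext y; simp
      rw [hcomp]
      have hinlnorm : ‖inl‖ ≤ 1 := by
        apply ContinuousLinearMap.opNorm_le_bound _ zero_le_one
        intro y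
        rw [one_mul, hinl]
        rw [show (ContinuousLinearMap.inl ℝ E E) y = (y, (0 : E)) from rfl, Prod.norm_def]
        simp
      have hlipb : ‖(D (x, b)) - (D (x, 0))‖ ≤ (K : ℝ) * ‖b‖ := by
        have h1 := (hmem_t (x, b) hx hbnorm).1
        have h2 := (hmem_t (x, 0) hx (by simpa using hρpos)).1
        have := hLip.dist_le_mul (x, b) h1 (x, 0) h2
        rw [dist_eq_norm, dist_eq_norm] at this
        have hd : ‖((x, b) : E × E) - (x, 0)‖ = ‖b‖ := by
          rw [Prod.norm_def]
          simp
        rw [hd] at this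
        exact this
      calc ‖((D (x, b)) - (D (x, 0))).comp inl‖
          ≤ ‖(D (x, b)) - (D (x, 0))‖ * ‖inl‖ := ContinuousLinearMap.opNorm_comp_le _ _
        _ ≤ ((K : ℝ) * ‖b‖) * 1 :=
            mul_le_mul hlipb hinlnorm (norm_nonneg _) (by positivity)
        _ = (K : ℝ) * ‖b‖ := mul_one _
    have hMVT := (convex_ball (0 : E) ρ).norm_image_sub_le_of_norm_hasFDerivWithin_le
      (f := fun y : E => mh (y, b) - y - b)
      (f' := fun y : E => (D (y, b)).comp inl - ContinuousLinearMap.id ℝ E)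
      (fun y hy => by
        have hyn : ‖y‖ < ρ := by simpa [Metric.mem_ball, dist_eq_norm] using hy
        exact (((hder y hyn).sub (hasFDerivAt_id y)).sub_const b).hasFDerivWithinAt)
      (fun y hy => by
        have hyn : ‖y‖ < ρ := by simpa [Metric.mem_ball, dist_eq_norm] using hy
        exact hbound y hyn)
      (x := 0) (y := a)
      (by simpa [Metric.mem_ball] using hρpos)
      (by simpa [Metric.mem_ball, dist_eq_norm] using hanorm)
    have h00 : mh (0, b) - 0 - b = 0 := by
      rw [hid2 b (lt_trans hbnorm hρρ₀)]; abel
    calc ‖mh (a, b) - a - b‖ = ‖(mh (a, b) - a - b) - (mh (0, b) - 0 - b)‖ := by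
          rw [h00, sub_zero]
      _ ≤ (K : ℝ) * ‖b‖ * ‖a - 0‖ := hMVT
      _ = (K : ℝ) * ‖b‖ * ‖a‖ := by rw [sub_zero]
  -- constants
  have hmem_t' := hmem_t
  clear_value ρ
  set Kc : ℝ := (K : ℝ) + 1 with hKc
  have hKcpos : 0 < Kc := by positivity
  have estK : ∀ a b : E, ‖a‖ < ρ → ‖b‖ < ρ → ‖mh (a, b) - a - b‖ ≤ Kc * ‖b‖ * ‖a‖ := by
    intro a b ha hb
    refine le_trans (est a b ha hb) ?_
    rw [hKc]
    nlinarith [norm_nonneg a, norm_nonneg b, mul_nonneg (norm_nonneg b) (norm_nonneg a)]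
  clear_value Kc
  set δ : ℝ := min (ρ / 2) (1 / (2 * Kc)) with hδ
  have hδpos : 0 < δ := lt_min (by linarith) (by positivity)
  have hδρ : δ < ρ := lt_of_le_of_lt (min_le_left _ _) (by linarith)
  have hKcδ : Kc * δ ≤ 1 / 2 := by
    have h1 : δ ≤ 1 / (2 * Kc) := min_le_right _ _
    calc Kc * δ ≤ Kc * (1 / (2 * Kc)) := mul_le_mul_of_nonneg_left h1 (le_of_lt hKcpos)
      _ = 1 / 2 := by field_simp [hKcpos.ne']
  clear_value δ
  -- the basic open sets
  set S : ℝ → Set G := fun ε => c.source ∩ ψ ⁻¹' Metric.ball (0 : E) ε with hS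
  have hSopen : ∀ ε : ℝ, IsOpen (S ε) := by
    intro ε
    exact ContinuousOn.isOpen_inter_preimage (c.continuousOn.sub continuousOn_const)
      c.open_source Metric.isOpen_ball
  have hS1 : ∀ ε : ℝ, 0 < ε → (1 : G) ∈ S ε := by
    intro ε hε
    refine ⟨mem_chart_source E 1, ?_⟩
    simp [hψ1, Metric.mem_ball, hε]
  have hSmem : ∀ ε : ℝ, ∀ g ∈ S ε, g ∈ c.source ∧ ‖ψ g‖ < ε := by
    intro ε g hg
    refine ⟨hg.1, ?_⟩
    have := hg.2
    rwa [Set.mem_preimage, Metric.mem_ball, dist_eq_norm, sub_zero] at this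
  have hSmono : ∀ ε ε' : ℝ, ε ≤ ε' → S ε ⊆ S ε' := by
    intro ε ε' h g hg
    exact ⟨hg.1, Set.mem_preimage.mpr (Metric.ball_subset_ball h (Set.mem_preimage.mp hg.2))⟩
  have hSintro : ∀ ε : ℝ, ∀ g : G, g ∈ c.source → ‖ψ g‖ < ε → g ∈ S ε := by
    intro ε g h1 h2
    exact ⟨h1, by rw [Set.mem_preimage, Metric.mem_ball, dist_eq_norm, sub_zero]; exact h2⟩
  -- multiplication safety
  obtain ⟨Vs, hVso, hVs1, hVsmul⟩ :=
    exists_open_nhds_one_mul_subset (c.open_source.mem_nhds (mem_chart_source E 1))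
  have hshrink : ∃ ε₁ > 0, S ε₁ ⊆ Vs := by
    have hsymm1 : c.symm o = 1 := by rw [ho, c.left_inv (mem_chart_source E 1)]
    have hcw : ContinuousWithinAt c.symm c.target o := c.continuousOn_symm o hoT
    have hmemVs : c.symm ⁻¹' Vs ∈ nhdsWithin o c.target := by
      apply hcw
      rw [hsymm1]
      exact hVso.mem_nhds hVs1
    rw [mem_nhdsWithin] at hmemVs
    obtain ⟨O, hOopen, hOmem, hOsub⟩ := hmemVs
    obtain ⟨ε₁, hε₁pos, hε₁ball⟩ := Metric.isOpen_iff.mp hOopen o hOmem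
    refine ⟨ε₁, hε₁pos, ?_⟩
    rintro g ⟨hgs, hgb⟩
    have h1 : c g ∈ O := by
      apply hε₁ball
      rw [Metric.mem_ball, dist_eq_norm]
      have := Set.mem_preimage.mp hgb
      rwa [Metric.mem_ball, dist_eq_norm, sub_zero] at this
    have h2 : c g ∈ c.target := c.map_source hgs
    have := hOsub ⟨h1, h2⟩
    rwa [Set.mem_preimage, c.left_inv hgs] at this
  obtain ⟨ε₁, hε₁pos, hε₁sub⟩ := hshrink
  clear_value S
  set ε : ℝ := min δ ε₁ with hε
  have hεpos : 0 < ε := lt_min hδpos hε₁pos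
  have hεδ : ε ≤ δ := min_le_left _ _
  have hερ : ε < ρ := lt_of_le_of_lt hεδ hδρ
  have hSεV : S ε ⊆ Vs := subset_trans (hSmono ε ε₁ (min_le_right _ _)) hε₁sub
  clear_value ε
  -- the multiplication identity in the chart
  have hmul : ∀ g g' : G, g ∈ c.source → g' ∈ c.source → ψ (g * g') = mh (ψ g, ψ g') := by
    intro g g' hg hg'
    simp only [hψ, hmh, hFm]
    rw [sub_add_cancel, sub_add_cancel, c.left_inv hg, c.left_inv hg']
  -- z = 1 from ψ z = 0
  have hzone : ∀ z : G, z ∈ c.source → ψ z = 0 → z = 1 := by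
    intro z hzs hz0
    have : c z = c 1 := by
      have : c z - o = 0 := hz0
      rw [ho] at this
      exact sub_eq_zero.mp this
    exact c.injOn hzs (mem_chart_source E 1) this
  -- the error propagation step
  have hstep : ∀ (w z : G), w ∈ c.source → z ∈ c.source → ‖ψ w‖ < ε → ‖ψ z‖ < ε →
      ‖ψ (w * z) - (ψ w + ψ z)‖ ≤ Kc * δ * ‖ψ z‖ := by
    intro w z hw hz hwn hzn
    rw [hmul w z hw hz]
    have h1 := estK (ψ w) (ψ z) (lt_trans hwn hερ) (lt_trans hzn hερ)
    have h2 : Kc * ‖ψ z‖ * ‖ψ w‖ ≤ Kc * δ * ‖ψ z‖ := by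
      have hwδ : ‖ψ w‖ ≤ δ := le_of_lt (lt_of_lt_of_le hwn hεδ)
      calc Kc * ‖ψ z‖ * ‖ψ w‖ ≤ Kc * ‖ψ z‖ * δ := by
            apply mul_le_mul_of_nonneg_left hwδ
            positivity
        _ = Kc * δ * ‖ψ z‖ := by ring
    calc ‖mh (ψ w, ψ z) - (ψ w + ψ z)‖ = ‖mh (ψ w, ψ z) - ψ w - ψ z‖ := by
          congr 1; abel
      _ ≤ Kc * ‖ψ z‖ * ‖ψ w‖ := h1
      _ ≤ Kc * δ * ‖ψ z‖ := h2
  clear_value mh Fm ψ o c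
  refine ⟨S ε, hSopen ε, hS1 ε hεpos, ?_, ?_⟩
  · -- no small subgroups
    intro z hz
    have hz1 := hSmem ε z (by simpa using hz 1)
    have hzsrc : z ∈ c.source := hz1.1
    have hvnorm : ‖ψ z‖ < ε := hz1.2
    have key : ∀ n : ℕ, ‖ψ (z ^ n) - (n : ℝ) • ψ z‖ ≤ (n : ℝ) * (Kc * δ * ‖ψ z‖) := by
      intro n
      induction n with
      | zero => simp [hψ1]
      | succ n ih =>
        have hzn := hSmem ε (z ^ n) (hz n)
        have heq : ‖ψ (z ^ (n + 1)) - (ψ (z ^ n) + ψ z)‖ ≤ Kc * δ * ‖ψ z‖ := by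
          rw [pow_succ]
          exact hstep (z ^ n) z hzn.1 hzsrc hzn.2 hvnorm
        push_cast
        calc ‖ψ (z ^ (n + 1)) - ((n : ℕ) + 1 : ℝ) • ψ z‖
            = ‖(ψ (z ^ (n + 1)) - (ψ (z ^ n) + ψ z)) + (ψ (z ^ n) - (n : ℝ) • ψ z)‖ := by
              congr 1
              rw [add_smul, one_smul]
              abel
          _ ≤ ‖ψ (z ^ (n + 1)) - (ψ (z ^ n) + ψ z)‖ + ‖ψ (z ^ n) - (n : ℝ) • ψ z‖ :=
              norm_add_le _ _
          _ ≤ Kc * δ * ‖ψ z‖ + (n : ℝ) * (Kc * δ * ‖ψ z‖) := add_le_add heq ih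
          _ = ((n : ℕ) + 1 : ℝ) * (Kc * δ * ‖ψ z‖) := by push_cast; ring
    have hr0 : ‖ψ z‖ = 0 := by
      by_contra hr
      have hrpos : 0 < ‖ψ z‖ := lt_of_le_of_ne (norm_nonneg _) (Ne.symm hr)
      obtain ⟨n, hn⟩ := exists_nat_gt (2 * ε / ‖ψ z‖)
      have h1 : (n : ℝ) * ‖ψ z‖ - (n : ℝ) * (Kc * δ * ‖ψ z‖) ≤ ‖ψ (z ^ n)‖ := by
        have hk := key n
        have hrev := norm_sub_rev ((n : ℝ) • ψ z) (ψ (z ^ n))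
        have htri := norm_sub_norm_le ((n : ℝ) • ψ z) (ψ (z ^ n))
        have hsm : ‖(n : ℝ) • ψ z‖ = (n : ℝ) * ‖ψ z‖ := by
          rw [norm_smul, Real.norm_natCast]
        linarith
      have h2 : ‖ψ (z ^ n)‖ < ε := (hSmem ε (z ^ n) (hz n)).2
      have h3 : (n : ℝ) * (Kc * δ * ‖ψ z‖) ≤ (n : ℝ) * (‖ψ z‖ / 2) := by
        apply mul_le_mul_of_nonneg_left _ (Nat.cast_nonneg n)
        calc Kc * δ * ‖ψ z‖ ≤ (1 / 2) * ‖ψ z‖ :=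
              mul_le_mul_of_nonneg_right hKcδ (norm_nonneg _)
          _ = ‖ψ z‖ / 2 := by ring
      have h4 : 2 * ε / ‖ψ z‖ * ‖ψ z‖ < (n : ℝ) * ‖ψ z‖ :=
        (mul_lt_mul_of_pos_right hn hrpos)
      rw [div_mul_cancel₀ _ (ne_of_gt hrpos)] at h4
      nlinarith
    exact hzone z hzsrc (norm_eq_zero.mp hr0)
  · -- local torsion-freeness
    intro m hm
    have hm' : (0 : ℝ) < m := by exact_mod_cast hm
    have h2mpos : (0 : ℝ) < 2 * (m : ℝ) := by positivity
    have hεm2pos : 0 < ε / (2 * (m : ℝ)) := div_pos hεpos h2mpos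
    refine ⟨S (ε / (2 * (m : ℝ))), hSopen _, hS1 _ hεm2pos, ?_⟩
    intro z hzV hzm
    obtain ⟨hzsrc, hvb⟩ := hSmem _ z hzV
    have hεm : ε / (2 * m) ≤ ε := by
      apply div_le_self (le_of_lt hεpos)
      have : (1 : ℝ) ≤ (m : ℝ) := by exact_mod_cast hm
      linarith
    have hzSε : z ∈ S ε := hSmono (ε / (2 * m)) ε hεm hzV
    have key : ∀ k : ℕ, k ≤ m → z ^ k ∈ S ε ∧
        ‖ψ (z ^ k) - (k : ℝ) • ψ z‖ ≤ (k : ℝ) * (Kc * δ * ‖ψ z‖) := by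
      intro k
      induction k with
      | zero =>
        intro _
        constructor
        · rw [pow_zero]; exact hS1 ε hεpos
        · simp [hψ1]
      | succ k ih =>
        intro hk1
        obtain ⟨hkS, hkerr⟩ := ih (Nat.le_of_succ_le hk1)
        obtain ⟨hksrc, hknorm⟩ := hSmem ε (z ^ k) hkS
        have hsrc1 : z ^ (k + 1) ∈ c.source := by
          rw [pow_succ]
          exact hVsmul (Set.mul_mem_mul (hSεV hkS) (hSεV hzSε))
        have heq : ‖ψ (z ^ (k + 1)) - (ψ (z ^ k) + ψ z)‖ ≤ Kc * δ * ‖ψ z‖ := by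
          rw [pow_succ]
          exact hstep (z ^ k) z hksrc hzsrc hknorm (lt_of_lt_of_le hvb hεm)
        have herr : ‖ψ (z ^ (k + 1)) - ((k : ℕ) + 1 : ℝ) • ψ z‖
            ≤ ((k : ℕ) + 1 : ℝ) * (Kc * δ * ‖ψ z‖) := by
          push_cast
          calc ‖ψ (z ^ (k + 1)) - ((k : ℕ) + 1 : ℝ) • ψ z‖
              = ‖(ψ (z ^ (k + 1)) - (ψ (z ^ k) + ψ z)) + (ψ (z ^ k) - (k : ℝ) • ψ z)‖ := by
                congr 1
                rw [add_smul, one_smul]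
                abel
            _ ≤ ‖ψ (z ^ (k + 1)) - (ψ (z ^ k) + ψ z)‖ + ‖ψ (z ^ k) - (k : ℝ) • ψ z‖ :=
                norm_add_le _ _
            _ ≤ Kc * δ * ‖ψ z‖ + (k : ℝ) * (Kc * δ * ‖ψ z‖) := add_le_add heq hkerr
            _ = ((k : ℕ) + 1 : ℝ) * (Kc * δ * ‖ψ z‖) := by push_cast; ring
        refine ⟨hSintro ε _ hsrc1 ?_, by push_cast; exact herr⟩
        have hnormb : ‖ψ (z ^ (k + 1))‖ ≤ ((k : ℕ) + 1 : ℝ) * ‖ψ z‖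
            + ((k : ℕ) + 1 : ℝ) * (Kc * δ * ‖ψ z‖) := by
          have htri : ‖ψ (z ^ (k + 1))‖ - ‖((k : ℕ) + 1 : ℝ) • ψ z‖
              ≤ ‖ψ (z ^ (k + 1)) - ((k : ℕ) + 1 : ℝ) • ψ z‖ := norm_sub_norm_le _ _
          rw [norm_smul] at htri
          have : ‖((k : ℕ) + 1 : ℝ)‖ = ((k : ℕ) + 1 : ℝ) := by
            rw [Real.norm_eq_abs, abs_of_pos]; positivity
          rw [this] at htri
          linarith
        have hKδterm : Kc * δ * ‖ψ z‖ ≤ ‖ψ z‖ / 2 := by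
          calc Kc * δ * ‖ψ z‖ ≤ (1 / 2) * ‖ψ z‖ :=
              mul_le_mul_of_nonneg_right hKcδ (norm_nonneg _)
            _ = ‖ψ z‖ / 2 := by ring
        have hk1m : ((k : ℕ) + 1 : ℝ) ≤ (m : ℝ) := by exact_mod_cast hk1
        have hfinal : ((k : ℕ) + 1 : ℝ) * ‖ψ z‖ + ((k : ℕ) + 1 : ℝ) * (Kc * δ * ‖ψ z‖)
            < ε := by
          have hb1 : ((k : ℕ) + 1 : ℝ) * ‖ψ z‖ + ((k : ℕ) + 1 : ℝ) * (Kc * δ * ‖ψ z‖)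
              ≤ ((k : ℕ) + 1 : ℝ) * (2 * ‖ψ z‖) := by
            have := mul_le_mul_of_nonneg_left hKδterm (show (0:ℝ) ≤ ((k : ℕ) + 1 : ℝ) by positivity)
            nlinarith [norm_nonneg (ψ z)]
          have hb2 : ((k : ℕ) + 1 : ℝ) * (2 * ‖ψ z‖) < ε := by
            have h2m : (0 : ℝ) < 2 * m := by positivity
            have := mul_lt_mul_of_pos_left hvb (show (0:ℝ) < 2 * ((k : ℕ) + 1 : ℝ) by positivity)
            have hle : 2 * ((k : ℕ) + 1 : ℝ) * (ε / (2 * m)) ≤ ε := by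
              rw [div_eq_mul_inv]
              have : 2 * ((k : ℕ) + 1 : ℝ) ≤ 2 * (m : ℝ) := by linarith
              calc 2 * ((k : ℕ) + 1 : ℝ) * (ε * (2 * (m:ℝ))⁻¹)
                  ≤ 2 * (m : ℝ) * (ε * (2 * (m:ℝ))⁻¹) := by
                    apply mul_le_mul_of_nonneg_right this
                    positivity
                _ = ε := by field_simp
            calc ((k : ℕ) + 1 : ℝ) * (2 * ‖ψ z‖) = 2 * ((k : ℕ) + 1 : ℝ) * ‖ψ z‖ := by ring
              _ < 2 * ((k : ℕ) + 1 : ℝ) * (ε / (2 * m)) := by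
                  apply mul_lt_mul_of_pos_left hvb
                  positivity
              _ ≤ ε := hle
          linarith
        linarith
    have hfin := (key m le_rfl).2
    rw [hzm, hψ1] at hfin
    have hnorm : ‖(0 : E) - (m : ℝ) • ψ z‖ = (m : ℝ) * ‖ψ z‖ := by
      rw [zero_sub, norm_neg, norm_smul, Real.norm_natCast]
    rw [hnorm] at hfin
    have hKδterm : (m : ℝ) * (Kc * δ * ‖ψ z‖) ≤ (m : ℝ) * (‖ψ z‖ / 2) := by
      apply mul_le_mul_of_nonneg_left _ (Nat.cast_nonneg m)
      calc Kc * δ * ‖ψ z‖ ≤ (1 / 2) * ‖ψ z‖ :=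
          mul_le_mul_of_nonneg_right hKcδ (norm_nonneg _)
        _ = ‖ψ z‖ / 2 := by ring
    have : (m : ℝ) * ‖ψ z‖ ≤ (m : ℝ) * (‖ψ z‖ / 2) := le_trans hfin hKδterm
    have hψz0 : ‖ψ z‖ = 0 := by
      by_contra hr
      have hrpos : 0 < ‖ψ z‖ := lt_of_le_of_ne (norm_nonneg _) (Ne.symm hr)
      nlinarith [mul_pos hm' hrpos]
    exact hzone z hzsrc (norm_eq_zero.mp hψz0)

end Core

/-- The identity component of a compact Lie group (modeled on a finite-dimensional real
vector space) that is nilpotent as an abstract group is central. -/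
theorem identityComponent_central_of_compact_nilpotent_lieGroup
    {E : Type*} [NormedAddCommGroup E] [NormedSpace ℝ E] [FiniteDimensional ℝ E]
    {G : Type*} [TopologicalSpace G] [ChartedSpace E G] [Group G]
    [LieGroup (modelWithCornersSelf ℝ E) (⊤ : ℕ∞) G] [CompactSpace G]
    (hnil : Group.IsNilpotent G) :
    ∀ g ∈ connectedComponent (1 : G), ∀ h : G, g * h = h * g := by
  haveI : IsTopologicalGroup G := topologicalGroup_of_lieGroup 𝓘(ℝ, E) (⊤ : ℕ∞) (G := G)
  haveI : T1Space G := auxT1 E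
  haveI : LocallyConnectedSpace G := ChartedSpace.locallyConnectedSpace E G
  obtain ⟨U, hUo, hU1, hNSS, hTor⟩ := auxCore E (G := G)
  set G0 : Subgroup G := Subgroup.connectedComponentOfOne G with hG0
  set T : ℕ → Subgroup G :=
    fun n => Nat.rec (motive := fun _ => Subgroup G) G0
      (fun _ S => (⁅S, (⊤ : Subgroup G)⁆).topologicalClosure) n with hT
  have hT0 : T 0 = G0 := rfl
  have hTs : ∀ n, T (n + 1) = (⁅T n, (⊤ : Subgroup G)⁆).topologicalClosure := fun n => rfl
  have hbotclos : (⊥ : Subgroup G).topologicalClosure = ⊥ := by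
    apply le_bot_iff.mp
    apply Subgroup.topologicalClosure_minimal _ le_rfl
    rw [Subgroup.coe_bot]
    exact isClosed_singleton
  -- the commutator subgroup as closure of a set of commutators
  have hset : ∀ n, ⁅T n, (⊤ : Subgroup G)⁆
      = Subgroup.closure (⋃ h : G, (fun x : G => ⁅x, h⁆) '' ((T n : Subgroup G) : Set G)) := by
    intro n
    rw [Subgroup.commutator_def]
    congr 1
    ext a
    constructor
    · rintro ⟨g₁, h₁, g₂, -, rfl⟩
      exact Set.mem_iUnion.mpr ⟨g₂, ⟨g₁, h₁, rfl⟩⟩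
    · rintro ha
      obtain ⟨s, ⟨h, rfl⟩, x, hx, rfl⟩ := ha
      exact ⟨x, hx, h, Subgroup.mem_top h, rfl⟩
  have hTconn : ∀ n, IsPreconnected ((T n : Subgroup G) : Set G) := by
    intro n
    induction n with
    | zero => exact isPreconnected_connectedComponent
    | succ n ih =>
      rw [hTs, hset n]
      apply auxPreconnClosure
      · refine Set.mem_iUnion.mpr ⟨1, ⟨1, (T n).one_mem, ?_⟩⟩
        simp only [commutatorElement_def]; group
      · rw [← Set.sUnion_range]
        apply isPreconnected_sUnion (1 : G)
        · rintro u ⟨h, rfl⟩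
          refine ⟨1, (T n).one_mem, ?_⟩
          simp only [commutatorElement_def]; group
        · rintro u ⟨h, rfl⟩
          apply ih.image
          apply Continuous.continuousOn
          simp only [commutatorElement_def]
          exact ((continuous_id.mul continuous_const).mul continuous_inv).mul continuous_const
  have hTclosed : ∀ n, IsClosed ((T n : Subgroup G) : Set G) := by
    intro n
    cases n with
    | zero => exact isClosed_connectedComponent
    | succ n => rw [hTs]; exact Subgroup.isClosed_topologicalClosure _
  -- nilpotency kills the series
  have hTle : ∀ n, T n ≤ (Subgroup.lowerCentralSeries (⊤ : Subgroup G) n).topologicalClosure := by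
    intro n
    induction n with
    | zero =>
      rw [lowerCentralSeries_zero]
      exact le_trans le_top (Subgroup.le_topologicalClosure _)
    | succ n ih =>
      rw [hTs]
      apply Subgroup.topologicalClosure_minimal
      · rw [Subgroup.commutator_le]
        intro g₁ hg₁ g₂ _
        have hg₁' : g₁ ∈ closure ((Subgroup.lowerCentralSeries (⊤ : Subgroup G) n : Subgroup G) : Set G) := by
          have := ih hg₁
          rwa [← Subgroup.topologicalClosure_coe, SetLike.mem_coe]
        have hmem : (fun x : G => ⁅x, g₂⁆) g₁
            ∈ closure ((Subgroup.lowerCentralSeries (⊤ : Subgroup G) (n + 1) : Subgroup G) : Set G) := by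
          apply map_mem_closure _ hg₁'
          · intro y hy
            rw [SetLike.mem_coe, lowerCentralSeries_succ]
            exact Subgroup.commutator_mem_commutator hy (Subgroup.mem_top g₂)
          · simp only [commutatorElement_def]
            exact ((continuous_id.mul continuous_const).mul continuous_inv).mul continuous_const
        rw [← SetLike.mem_coe, Subgroup.topologicalClosure_coe]
        exact hmem
      · exact Subgroup.isClosed_topologicalClosure _
  obtain ⟨N, hN⟩ := nilpotent_iff_lowerCentralSeries.mp hnil
  have hTN : T N = ⊥ := by
    apply le_bot_iff.mp
    have := hTle N
    rwa [hN, hbotclos] at this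
  -- the descending step
  have hstep : ∀ j, T (j + 2) = ⊥ → T (j + 1) = ⊥ := by
    intro j h2
    have hcen : ∀ x ∈ T j, ∀ h g : G, Commute ⁅x, h⁆ g := by
      intro x hx h g
      rw [← commutatorElement_eq_one_iff_commute]
      have h1 : ⁅x, h⁆ ∈ T (j + 1) := by
        rw [hTs]
        exact Subgroup.le_topologicalClosure _
          (Subgroup.commutator_mem_commutator hx (Subgroup.mem_top h))
      have h2' : ⁅⁅x, h⁆, g⁆ ∈ T (j + 2) := by
        rw [hTs (j + 1)]
        exact Subgroup.le_topologicalClosure _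
          (Subgroup.commutator_mem_commutator h1 (Subgroup.mem_top g))
      rw [h2] at h2'
      exact Subgroup.mem_bot.mp h2'
    have hz := auxStep U hUo hU1 hNSS hTor (hTconn j) ((hTclosed j).isCompact) hcen
    rw [hTs j]
    have hbot : ⁅T j, (⊤ : Subgroup G)⁆ = ⊥ := by
      apply le_bot_iff.mp
      rw [Subgroup.commutator_le]
      intro g₁ h₁ g₂ _
      rw [Subgroup.mem_bot]
      exact hz g₁ h₁ g₂
    rw [hbot, hbotclos]
  have hdesc : ∀ j, T (j + 1) = ⊥ → T 1 = ⊥ := by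
    intro j
    induction j with
    | zero => exact id
    | succ j ih => intro h; exact ih (hstep j h)
  have hT1 : T 1 = ⊥ := by
    apply hdesc N
    rw [hTs N, hTN]
    have hbot : ⁅(⊥ : Subgroup G), (⊤ : Subgroup G)⁆ = ⊥ := by
      apply le_bot_iff.mp
      rw [Subgroup.commutator_le]
      intro g₁ h₁ g₂ _
      rw [Subgroup.mem_bot] at h₁ ⊢
      rw [h₁]
      simp only [commutatorElement_def]; group
    rw [hbot, hbotclos]
  intro g hg h
  have hmem : ⁅g, h⁆ ∈ T 1 := by
    rw [show (1 : ℕ) = 0 + 1 from rfl, hTs 0]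
    exact Subgroup.le_topologicalClosure _
      (Subgroup.commutator_mem_commutator (by exact hg) (Subgroup.mem_top h))
  rw [hT1, Subgroup.mem_bot] at hmem
  exact (commutatorElement_eq_one_iff_commute.mp hmem).eq
end
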